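/- arXiv:1205.6733 — 2 statements merged into one kernel-verified Lean document; each statement's English description precedes it below -/
import Mathlib

section
/- In the partition setting under Assumptions (D), (M) and (B), let p ≥ 1 with α·γ^{2p−2} < 1, and suppose δ(p) ≥ 1 is such that ‖q̂_{j,k}(f)‖_{j,i,p} ≤ M_{j,k}(i)·δ(p)·max_{l∈s_k(i)} ‖f‖_{k,l,p} for all 1 ≤ j < k ≤ n, i ∈ I_j and bounded measurable f. Then, with δ(2p) = δ(p)·γ^{1−1/p}/(1 − α·γ^{2p−2})^{1/(2p)}, one has ‖q̂_{j,k}(f)‖_{j,i,2p} ≤ M_{j,k}(i)·δ(2p)·max_{l∈s_k(i)} ‖f‖_{k,l,2p} for all such j, k, i, f; consequently ‖q̂_{j,k}(f)‖_{j,2p} ≤ A_{j,k}·δ(2p)·‖f‖_{k,2p}. -/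
open MeasureTheory

variable {E : Type} [MeasurableSpace E]
variable {I : ℕ → Type} [∀ k, Fintype (I k)] [∀ k, Nonempty (I k)] [∀ k, DecidableEq (I k)]

/-- The restricted (normalized) measure μ_{k,j}: the restriction of `μ` to the
partition element `S`, normalized to a probability measure. -/
noncomputable def muLoc (μ : Measure E) (S : Set E) : Measure E := (μ S)⁻¹ • μ.restrict S

/-- The local L_p-norm ‖f‖_{k,j,p} = μ_{k,j}(|f|^p)^{1/p}. -/
noncomputable def locNorm (ν : Measure E) (p : ℝ) (f : E → ℝ) : ℝ :=
  (∫ x, |f x| ^ p ∂ν) ^ (1/p)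

/-- The norm ‖f‖_{k,p} = max_{j ∈ I_k} ‖f‖_{k,j,p}. -/
noncomputable def maxNorm (μ : ℕ → Measure E) (F : ∀ k, I k → Set E) (k : ℕ) (p : ℝ)
    (f : E → ℝ) : ℝ :=
  Finset.univ.sup' Finset.univ_nonempty fun j : I k => locNorm (muLoc (μ k) (F k j)) p f

/-- The relative mass change m_{k,k+1}(j) = μ_{k+1}(F_j)/μ_k(F_j). -/
noncomputable def mRatio (μ : ℕ → Measure E) (F : ∀ k, I k → Set E) (k : ℕ) (j : I k) : ℝ :=
  (μ (k+1) (F k j)).toReal / (μ k (F k j)).toReal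

/-- The successor set s_k(i) = {l ∈ I_k | p_j(l) = i} of i ∈ I_j. -/
def succSet (p : ∀ j k : ℕ, I k → I j) (j k : ℕ) (i : I j) : Finset (I k) :=
  Finset.univ.filter fun l => p j k l = i

/-- The product Π_{r=j}^{k-1} m_{r,r+1}(p_r(l)) of relative mass changes along
the branch leading to l ∈ I_k; its maximum over l ∈ s_k(i) is M_{j,k}(i). -/
noncomputable def Mprod (μ : ℕ → Measure E) (F : ∀ k, I k → Set E) (p : ∀ j k : ℕ, I k → I j)
    (j k : ℕ) (l : I k) : ℝ :=
  ∏ r ∈ Finset.Ico j k, mRatio μ F r (p r k l)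

/-- The propagator q_{j,k}(f) = ḡ_{j,j+1}·q̂_{j+1,k}(K_k(f)). -/
noncomputable def qFull (μ : ℕ → Measure E) (g : ℕ → E → ℝ) (K : ℕ → E → Measure E)
    (qhat : ℕ → ℕ → (E → ℝ) → E → ℝ) (j k : ℕ) (f : E → ℝ) : E → ℝ :=
  fun x => (g j x / (∫ z, g j z ∂(μ j))) * qhat (j+1) k (fun y => ∫ z, f z ∂(K k y)) x

/-- The constant δ(2^r) = Π_{t=1}^{r} γ^{1-2^{-(t-1)}}/(1-α·γ^{2^t-2})^{2^{-t}}. -/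
noncomputable def deltaP (α γ : ℝ) (r : ℕ) : ℝ :=
  ∏ t ∈ Finset.Icc 1 r,
    γ ^ (1 - (2:ℝ) ^ (1 - (t:ℝ))) / (1 - α * γ ^ ((2:ℝ) ^ t - 2)) ^ ((2:ℝ) ^ (-(t:ℝ)))

set_option linter.unusedVariables false
set_option linter.unusedSectionVars false
set_option maxHeartbeats 1000000

open scoped ENNReal NNReal

section Aux

lemma aux_int_bdd {ν : Measure E} [IsFiniteMeasure ν] {h : E → ℝ} (hm : Measurable h) {C : ℝ}
    (hb : ∀ x, |h x| ≤ C) : Integrable h ν :=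
  Integrable.mono' (integrable_const C) hm.aestronglyMeasurable
    (Filter.Eventually.of_forall fun x => by simpa [Real.norm_eq_abs] using hb x)

lemma aux_locNorm_nonneg (ν : Measure E) (q : ℝ) (f : E → ℝ) : 0 ≤ locNorm ν q f :=
  Real.rpow_nonneg (integral_nonneg fun x => Real.rpow_nonneg (abs_nonneg _) _) _

lemma aux_isProb_muLoc {ν : Measure E} {S : Set E} (h0 : ν S ≠ 0) (ht : ν S ≠ ⊤) :
    IsProbabilityMeasure (muLoc ν S) := by
  constructor
  rw [muLoc, Measure.smul_apply, Measure.restrict_apply_univ, smul_eq_mul,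
    ENNReal.inv_mul_cancel h0 ht]

lemma aux_rpow_meas {u : E → ℝ} (hu : Measurable u) {e : ℝ} (he : 0 ≤ e) :
    Measurable fun x => |u x| ^ e :=
  (Real.continuous_rpow_const he).measurable.comp hu.abs

lemma aux_rpow_bdd {u : E → ℝ} {C : ℝ} {e : ℝ} (he : 0 ≤ e) (hb : ∀ x, |u x| ≤ C) :
    ∀ x, abs (|u x| ^ e) ≤ |C| ^ e := fun x => by
  rw [abs_of_nonneg (Real.rpow_nonneg (abs_nonneg _) _)]
  exact Real.rpow_le_rpow (abs_nonneg _) ((hb x).trans (le_abs_self C)) he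

lemma aux_ofReal_int_rpow {ν : Measure E} [IsFiniteMeasure ν] {u : E → ℝ} (hm : Measurable u)
    {C : ℝ} (hb : ∀ x, |u x| ≤ C) {q : ℝ} (hq : 0 < q) :
    ENNReal.ofReal (∫ x, |u x| ^ q ∂ν) = ∫⁻ x, (ENNReal.ofReal |u x|) ^ q ∂ν := by
  rw [MeasureTheory.ofReal_integral_eq_lintegral_ofReal
      (aux_int_bdd (aux_rpow_meas hm hq.le) (aux_rpow_bdd hq.le hb))
      (Filter.Eventually.of_forall fun x => Real.rpow_nonneg (abs_nonneg _) _)]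
  exact lintegral_congr fun x => (ENNReal.ofReal_rpow_of_nonneg (abs_nonneg _) hq.le).symm

lemma aux_lint_rpow_lt_top {ν : Measure E} [IsFiniteMeasure ν] {u : E → ℝ}
    {C : ℝ} (hb : ∀ x, |u x| ≤ C) {q : ℝ} (hq : 0 ≤ q) :
    ∫⁻ x, (ENNReal.ofReal |u x|) ^ q ∂ν < ⊤ := by
  calc ∫⁻ x, (ENNReal.ofReal |u x|) ^ q ∂ν
      ≤ ∫⁻ _, (ENNReal.ofReal C) ^ q ∂ν := by
        exact lintegral_mono fun x => ENNReal.rpow_le_rpow (ENNReal.ofReal_le_ofReal (hb x)) hq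
    _ = (ENNReal.ofReal C) ^ q * ν Set.univ := by rw [lintegral_const]
    _ < ⊤ := ENNReal.mul_lt_top (ENNReal.rpow_lt_top_of_nonneg hq ENNReal.ofReal_ne_top)
        (measure_lt_top _ _)

lemma aux_locNorm_eq {ν : Measure E} [IsFiniteMeasure ν] {u : E → ℝ} (hm : Measurable u)
    {C : ℝ} (hb : ∀ x, |u x| ≤ C) {q : ℝ} (hq : 0 < q) :
    locNorm ν q u = ((∫⁻ x, (ENNReal.ofReal |u x|) ^ q ∂ν).toReal) ^ (1/q) := by
  rw [locNorm, ← aux_ofReal_int_rpow hm hb hq,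
    ENNReal.toReal_ofReal (integral_nonneg fun x => Real.rpow_nonneg (abs_nonneg _) _)]

lemma aux_locNorm_rpow {ν : Measure E} (u : E → ℝ) {e : ℝ} (he : 0 < e) :
    locNorm ν e u ^ e = ∫ x, |u x| ^ e ∂ν := by
  rw [locNorm, ← Real.rpow_mul (integral_nonneg fun x => Real.rpow_nonneg (abs_nonneg _) _),
    one_div, inv_mul_cancel₀ he.ne', Real.rpow_one]

/-- L^q–L^r monotonicity on a probability measure. -/
lemma aux_locNorm_mono {ν : Measure E} [IsProbabilityMeasure ν] {u : E → ℝ} (hm : Measurable u)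
    {C : ℝ} (hb : ∀ x, |u x| ≤ C) {q r : ℝ} (hq : 0 < q) (hqr : q ≤ r) :
    locNorm ν q u ≤ locNorm ν r u := by
  rcases eq_or_lt_of_le hqr with rfl | hlt
  · exact le_refl _
  have hr : 0 < r := hq.trans hlt
  set U : E → ℝ≥0∞ := fun x => ENNReal.ofReal |u x| with hU
  have hUm : Measurable U := hm.abs.ennreal_ofReal
  have hconj : (r/q).HolderConjugate ((r/q)/(r/q - 1)) :=
    Real.HolderConjugate.conjExponent ((one_lt_div hq).2 hlt)
  have key : ∫⁻ x, U x ^ q ∂ν ≤ (∫⁻ x, U x ^ r ∂ν) ^ (q/r) := by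
    have h2 := ENNReal.lintegral_mul_le_Lp_mul_Lq ν hconj
      (f := fun x => U x ^ q) (g := fun _ => 1) (hUm.pow_const q).aemeasurable
      aemeasurable_const
    simp only [Pi.mul_apply, mul_one, ENNReal.one_rpow, lintegral_one, measure_univ] at h2
    have hexp : q * (r/q) = r := by field_simp
    calc ∫⁻ x, U x ^ q ∂ν ≤ (∫⁻ x, (U x ^ q) ^ (r/q) ∂ν) ^ (1/(r/q)) := h2
      _ = (∫⁻ x, U x ^ r ∂ν) ^ (q/r) := by
          rw [one_div_div]
          congr 1
          exact lintegral_congr fun x => by rw [← ENNReal.rpow_mul, hexp]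
  have hfin : (∫⁻ x, U x ^ r ∂ν) ^ (q/r) ≠ ⊤ :=
    (ENNReal.rpow_lt_top_of_nonneg (div_nonneg hq.le hr.le)
      (aux_lint_rpow_lt_top hb hr.le).ne).ne
  have h3 : (∫⁻ x, U x ^ q ∂ν).toReal ≤ ((∫⁻ x, U x ^ r ∂ν) ^ (q/r)).toReal :=
    ENNReal.toReal_mono hfin key
  rw [aux_locNorm_eq hm hb hq, aux_locNorm_eq hm hb hr]
  calc ((∫⁻ x, U x ^ q ∂ν).toReal) ^ (1/q)
      ≤ (((∫⁻ x, U x ^ r ∂ν) ^ (q/r)).toReal) ^ (1/q) :=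
        Real.rpow_le_rpow ENNReal.toReal_nonneg h3 (by positivity)
    _ = ((∫⁻ x, U x ^ r ∂ν).toReal) ^ (1/r) := by
        rw [← ENNReal.toReal_rpow, ← Real.rpow_mul ENNReal.toReal_nonneg]
        congr 1
        field_simp


/-- Splitting a cell into finitely many positive-measure subcells bounds the local norm by
the max of the subcell norms. -/
lemma aux_split {ν : Measure E} [IsProbabilityMeasure ν] {ι : Type} (s : Finset ι)
    (hs : s.Nonempty) (T : ι → Set E) (S : Set E)
    (hTm : ∀ l, MeasurableSet (T l))
    (hdisj : ∀ l ∈ s, ∀ l' ∈ s, l ≠ l' → Disjoint (T l) (T l'))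
    (hcover : S = ⋃ l ∈ s, T l)
    (hTpos : ∀ l ∈ s, ν (T l) ≠ 0)
    {u : E → ℝ} (hm : Measurable u) {C : ℝ} (hb : ∀ x, |u x| ≤ C)
    {q : ℝ} (hq : 0 < q) :
    locNorm (muLoc ν S) q u ≤ s.sup' hs fun l => locNorm (muLoc ν (T l)) q u := by
  classical
  set U : E → ℝ≥0∞ := fun x => (ENNReal.ofReal |u x|) ^ q with hUdef
  have hUm : Measurable U := (Measurable.ennreal_ofReal hm.abs).pow_const q
  set Iloc : ι → ℝ≥0∞ := fun l => ∫⁻ x, U x ∂(muLoc ν (T l)) with hIdef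
  obtain ⟨l₀, hl₀s, hl₀max⟩ := Finset.exists_max_image s Iloc hs
  -- measure of S
  have hTne : ∀ l ∈ s, ν (T l) ≠ ⊤ := fun l _ => measure_ne_top ν (T l)
  have hrestr : ∀ l ∈ s, ∫⁻ x in T l, U x ∂ν = ν (T l) * Iloc l := by
    intro l hl
    rw [hIdef]
    simp only [muLoc, lintegral_smul_measure, smul_eq_mul]
    rw [← mul_assoc, ENNReal.mul_inv_cancel (hTpos l hl) (hTne l hl), one_mul]
  have hd : Set.PairwiseDisjoint (↑s) T := fun l hl l' hl' hne => hdisj l hl l' hl' hne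
  have hSsum : ∫⁻ x in S, U x ∂ν = ∑ l ∈ s, ν (T l) * Iloc l := by
    rw [hcover, lintegral_biUnion_finset hd (fun l _ => hTm l) U]
    exact Finset.sum_congr rfl hrestr
  have hSmeas : ν S = ∑ l ∈ s, ν (T l) := by
    rw [hcover, measure_biUnion_finset hd (fun l _ => hTm l)]
  have hS0 : ν S ≠ 0 := by
    rw [hSmeas]
    intro h0
    exact hTpos l₀ hl₀s (by
      have := Finset.sum_eq_zero_iff.1 h0 l₀ hl₀s
      exact this)
  have hSne : ν S ≠ ⊤ := measure_ne_top ν S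
  have hle : ∫⁻ x, U x ∂(muLoc ν S) ≤ Iloc l₀ := by
    have h1 : ∫⁻ x in S, U x ∂ν ≤ ν S * Iloc l₀ := by
      rw [hSsum, hSmeas, Finset.sum_mul]
      exact Finset.sum_le_sum fun l hl =>
        mul_le_mul_right (hl₀max l hl) _
    calc ∫⁻ x, U x ∂(muLoc ν S) = (ν S)⁻¹ * ∫⁻ x in S, U x ∂ν := by
          simp only [muLoc, lintegral_smul_measure, smul_eq_mul]
      _ ≤ (ν S)⁻¹ * (ν S * Iloc l₀) := mul_le_mul_right h1 _
      _ = Iloc l₀ := by rw [← mul_assoc, ENNReal.inv_mul_cancel hS0 hSne, one_mul]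
  haveI hP0 : IsProbabilityMeasure (muLoc ν S) := aux_isProb_muLoc hS0 hSne
  haveI hPl : IsProbabilityMeasure (muLoc ν (T l₀)) := aux_isProb_muLoc (hTpos l₀ hl₀s) (hTne l₀ hl₀s)
  have : locNorm (muLoc ν S) q u ≤ locNorm (muLoc ν (T l₀)) q u := by
    rw [aux_locNorm_eq hm hb hq, aux_locNorm_eq hm hb hq]
    refine Real.rpow_le_rpow ENNReal.toReal_nonneg ?_ (by positivity)
    exact ENNReal.toReal_mono (aux_lint_rpow_lt_top hb hq.le).ne hle
  exact this.trans (Finset.le_sup' (fun l => locNorm (muLoc ν (T l)) q u) hl₀s)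

/-- Hölder inequality for a weighted kernel integral. -/
lemma aux_holder {κ : Measure E} [IsProbabilityMeasure κ] {w h : E → ℝ}
    (hwm : Measurable w) (hw0 : ∀ y, 0 ≤ w y) {Cw : ℝ} (hwb : ∀ y, w y ≤ Cw)
    (hm : Measurable h) {Ch : ℝ} (hb : ∀ y, |h y| ≤ Ch)
    {c : ℝ} (hc : 0 < c) (hwc : ∀ᵐ y ∂κ, w y ≤ c)
    {p : ℝ} (hp : 1 ≤ p) :
    ∫ y, w y * |h y| ∂κ ≤ c ^ (1 - 1/p) * (∫ y, w y * |h y| ^ p ∂κ) ^ (1/p) := by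
  rcases eq_or_lt_of_le hp with rfl | hp1
  · norm_num
  set G : E → ℝ≥0∞ := fun y => ENNReal.ofReal (w y) with hG
  set H : E → ℝ≥0∞ := fun y => ENNReal.ofReal |h y| with hH
  have hGm : Measurable G := Measurable.ennreal_ofReal hwm
  have hHm : Measurable H := Measurable.ennreal_ofReal hm.abs
  have hconj : (p/(p-1)).HolderConjugate p :=
    (Real.HolderConjugate.conjExponent hp1).symm
  have hp0 : (0:ℝ) < p := lt_trans one_pos hp1
  have hp1' : p - 1 ≠ 0 := sub_ne_zero.mpr hp1.ne'
  have h1p : (0:ℝ) ≤ 1 - 1/p := by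
    rw [sub_nonneg, div_le_one hp0]
    exact hp
  have hint1 : Integrable (fun y => w y * |h y|) κ := by
    refine aux_int_bdd (hwm.mul hm.abs) (C := |Cw| * |Ch|) fun y => ?_
    rw [abs_mul, abs_abs]
    exact mul_le_mul ((abs_of_nonneg (hw0 y)).le.trans ((hwb y).trans (le_abs_self _)))
      ((hb y).trans (le_abs_self _)) (abs_nonneg _) (abs_nonneg _)
  have hint2 : Integrable (fun y => w y * |h y| ^ p) κ := by
    refine aux_int_bdd (hwm.mul (hm.abs.pow_const p)) (C := |Cw| * |Ch| ^ p) fun y => ?_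
    rw [abs_mul, abs_of_nonneg (Real.rpow_nonneg (abs_nonneg _) _)]
    refine mul_le_mul ((abs_of_nonneg (hw0 y)).le.trans ((hwb y).trans (le_abs_self _)))
      (Real.rpow_le_rpow (abs_nonneg _) ((hb y).trans (le_abs_self _)) hp0.le)
      (Real.rpow_nonneg (abs_nonneg _) _) (abs_nonneg _)
  have hX0 : 0 ≤ ∫ y, w y * |h y| ^ p ∂κ :=
    integral_nonneg fun y => mul_nonneg (hw0 y) (Real.rpow_nonneg (abs_nonneg _) _)
  have e1 : ENNReal.ofReal (∫ y, w y * |h y| ∂κ) = ∫⁻ y, G y * H y ∂κ := by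
    rw [MeasureTheory.ofReal_integral_eq_lintegral_ofReal hint1
      (Filter.Eventually.of_forall fun y => mul_nonneg (hw0 y) (abs_nonneg _))]
    exact lintegral_congr fun y => ENNReal.ofReal_mul (hw0 y)
  have e2 : ENNReal.ofReal (∫ y, w y * |h y| ^ p ∂κ) = ∫⁻ y, G y * H y ^ p ∂κ := by
    rw [MeasureTheory.ofReal_integral_eq_lintegral_ofReal hint2
      (Filter.Eventually.of_forall fun y => mul_nonneg (hw0 y) (Real.rpow_nonneg (abs_nonneg _) _))]
    exact lintegral_congr fun y => by
      rw [ENNReal.ofReal_mul (hw0 y), ENNReal.ofReal_rpow_of_nonneg (abs_nonneg _) hp0.le]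
  have hHold := ENNReal.lintegral_mul_le_Lp_mul_Lq κ hconj
    (f := fun y => G y ^ (1 - 1/p)) (g := fun y => G y ^ (1/p) * H y)
    ((hGm.pow_const _).aemeasurable) (((hGm.pow_const _).mul hHm).aemeasurable)
  have hpt : ∀ y, ((fun y => G y ^ (1-1/p)) * fun y => G y ^ (1/p) * H y) y = G y * H y := by
    intro y
    simp only [Pi.mul_apply]
    rw [← mul_assoc, ← ENNReal.rpow_add_of_nonneg _ _ h1p (by positivity), sub_add_cancel,
      ENNReal.rpow_one]
  have c1 : ∫⁻ y, (G y ^ (1-1/p)) ^ (p/(p-1)) ∂κ = ∫⁻ y, G y ∂κ := by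
    refine lintegral_congr fun y => ?_
    have hexp : (1-1/p)*(p/(p-1)) = 1 := by field_simp
    rw [← ENNReal.rpow_mul, hexp, ENNReal.rpow_one]
  have c2 : ∫⁻ y, (G y ^ (1/p) * H y) ^ p ∂κ = ∫⁻ y, G y * H y ^ p ∂κ := by
    refine lintegral_congr fun y => ?_
    rw [ENNReal.mul_rpow_of_nonneg _ _ hp0.le, ← ENNReal.rpow_mul, one_div,
      inv_mul_cancel₀ hp0.ne', ENNReal.rpow_one]
  have cG : ∫⁻ y, G y ∂κ ≤ ENNReal.ofReal c := by
    calc ∫⁻ y, G y ∂κ ≤ ∫⁻ _, ENNReal.ofReal c ∂κ :=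
          lintegral_mono_ae (hwc.mono fun y hy => ENNReal.ofReal_le_ofReal hy)
      _ = ENNReal.ofReal c := by rw [lintegral_const, measure_univ, mul_one]
  have h1d : 1/(p/(p-1)) = 1 - 1/p := by
    rw [one_div_div, sub_div, div_self hp0.ne']
  have main : ENNReal.ofReal (∫ y, w y * |h y| ∂κ)
      ≤ ENNReal.ofReal (c ^ (1-1/p) * (∫ y, w y * |h y| ^ p ∂κ) ^ (1/p)) := by
    rw [e1]
    calc ∫⁻ y, G y * H y ∂κ
        = ∫⁻ y, ((fun y => G y ^ (1-1/p)) * fun y => G y ^ (1/p) * H y) y ∂κ :=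
          (lintegral_congr hpt).symm
      _ ≤ (∫⁻ y, (G y ^ (1-1/p)) ^ (p/(p-1)) ∂κ) ^ (1/(p/(p-1)))
            * (∫⁻ y, (G y ^ (1/p) * H y) ^ p ∂κ) ^ (1/p) := hHold
      _ ≤ (ENNReal.ofReal c) ^ (1/(p/(p-1))) * (∫⁻ y, G y * H y ^ p ∂κ) ^ (1/p) := by
          rw [c1, c2]
          exact mul_le_mul' (ENNReal.rpow_le_rpow cG (by rw [h1d]; exact h1p)) le_rfl
      _ = ENNReal.ofReal (c ^ (1-1/p) * (∫ y, w y * |h y| ^ p ∂κ) ^ (1/p)) := by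
          rw [← e2, h1d, ENNReal.ofReal_mul (Real.rpow_nonneg hc.le _),
            ENNReal.ofReal_rpow_of_nonneg hc.le h1p,
            ENNReal.ofReal_rpow_of_nonneg hX0 (by positivity)]
  exact (ENNReal.ofReal_le_ofReal_iff
    (mul_nonneg (Real.rpow_nonneg hc.le _) (Real.rpow_nonneg hX0 _))).1 main

end Aux

/- Lemma 4.9 of the paper: an iterated local L_p-bound with constant δ(p)
   implies an iterated local L_{2p}-bound with constant
   δ(2p) = δ(p)·γ^{1-1/p}/(1-α·γ^{2p-2})^{1/(2p)}. -/
theorem stmt_16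
    (n : ℕ) (μ : ℕ → Measure E)
    (hμprob : ∀ k, k ≤ n → IsProbabilityMeasure (μ k))
    (hμac : ∀ j k, j ≤ n → k ≤ n → μ j ≪ μ k)
    (g : ℕ → E → ℝ)
    (hgmeas : ∀ k, Measurable (g k))
    (hgpos : ∀ k x, 0 < g k x)
    (hgbdd : ∀ k, ∃ C : ℝ, ∀ x, g k x ≤ C)
    (hgdens : ∀ k, k < n → ∀ f : E → ℝ, Measurable f → (∃ C : ℝ, ∀ x, |f x| ≤ C) →
      (∫ x, f x ∂(μ (k+1))) = (∫ x, f x * g k x ∂(μ k)) / (∫ x, g k x ∂(μ k)))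
    (K : ℕ → E → Measure E)
    (hKprob : ∀ k x, IsProbabilityMeasure (K k x))
    (hKmeas : ∀ k (A : Set E), MeasurableSet A → Measurable fun x => K k x A)
    (hKinv : ∀ k, k ≤ n → (μ k).bind (K k) = μ k)
    (F : ∀ k, I k → Set E)
    (hFmeas : ∀ k j, MeasurableSet (F k j))
    (hFpos : ∀ k, k ≤ n → ∀ j, 0 < μ 0 (F k j))
    (hFdisj : ∀ k, k ≤ n → ∀ j j' : I k, j ≠ j' → Disjoint (F k j) (F k j'))
    (hFcover : ∀ k, k ≤ n → (⋃ j : I k, F k j) = Set.univ)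
    (p : ∀ j k : ℕ, I k → I j)
    (hp : ∀ j k, j < k → k ≤ n → ∀ l : I k, F k l ⊆ F j (p j k l))
    (hsne : ∀ (j k : ℕ) (_ : j < k) (_ : k ≤ n) (i : I j), (succSet p j k i).Nonempty)
    (hD : ∀ k, 1 ≤ k → k ≤ n → ∀ (j : I k) (x : E), x ∉ F k j → K k x (F k j) = 0)
    (qhat : ℕ → ℕ → (E → ℝ) → E → ℝ)
    (hqdiag : ∀ k f, qhat k k f = f)
    (hqstep : ∀ j k, j < k → k ≤ n → ∀ (f : E → ℝ) (x : E),
      qhat j k f x = ∫ y, (g j y / (∫ z, g j z ∂(μ j))) * qhat (j+1) k f y ∂(K j x))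
    (α β : ℝ) (hα : 0 < α) (hβ0 : 0 ≤ β) (hβ1 : β ≤ 1)
    (hM : ∀ k, 1 ≤ k → k < n → ∀ (i : I k) (f : E → ℝ),
      Measurable f → (∃ C : ℝ, ∀ x, |f x| ≤ C) →
      (locNorm (muLoc (μ k) (F k i)) 2 (qhat k (k+1) f))^2
        ≤ (mRatio μ F k i)^2 *
            (α * (locNorm (muLoc (μ (k+1)) (F k i)) 2 f)^2
              + β * (∫ x, f x ∂(muLoc (μ (k+1)) (F k i)))^2))
    (γ : ℝ) (hγ : 1 ≤ γ)
    (hB : ∀ k, k < n → ∀ (j : I k) (x : E), x ∈ F k j →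
      ((μ k (F k j)).toReal / (μ (k+1) (F k j)).toReal)
        * (g k x / (∫ z, g k z ∂(μ k))) ≤ γ)
    (preal : ℝ) (hpreal : 1 ≤ preal)
    (hsmall : α * γ ^ (2*preal - 2) < 1)
    (δp : ℝ) (hδp : 1 ≤ δp)
    (hind : ∀ (j k : ℕ) (hjk : j < k) (hkn : k ≤ n), 1 ≤ j → ∀ (i : I j) (f : E → ℝ),
      Measurable f → (∃ C : ℝ, ∀ x, |f x| ≤ C) →
      locNorm (muLoc (μ j) (F j i)) preal (qhat j k f)
        ≤ ((succSet p j k i).sup' (hsne j k hjk hkn i) (Mprod μ F p j k)) * δp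
          * ((succSet p j k i).sup' (hsne j k hjk hkn i) fun l =>
              locNorm (muLoc (μ k) (F k l)) preal f)) :
    ∀ (j k : ℕ) (hjk : j < k) (hkn : k ≤ n), 1 ≤ j → ∀ f : E → ℝ, Measurable f → (∃ C : ℝ, ∀ x, |f x| ≤ C) →
      (∀ i : I j,
        locNorm (muLoc (μ j) (F j i)) (2*preal) (qhat j k f)
          ≤ ((succSet p j k i).sup' (hsne j k hjk hkn i) (Mprod μ F p j k))
            * (δp * γ ^ (1 - 1/preal) / (1 - α * γ ^ (2*preal - 2)) ^ (1/(2*preal)))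
            * ((succSet p j k i).sup' (hsne j k hjk hkn i) fun l =>
                locNorm (muLoc (μ k) (F k l)) (2*preal) f))
      ∧ maxNorm μ F j (2*preal) (qhat j k f)
          ≤ (Finset.univ.sup' Finset.univ_nonempty fun i : I j =>
              (succSet p j k i).sup' (hsne j k hjk hkn i) (Mprod μ F p j k))
            * (δp * γ ^ (1 - 1/preal) / (1 - α * γ ^ (2*preal - 2)) ^ (1/(2*preal)))
            * maxNorm μ F k (2*preal) f := by
  classical
  -- nonemptiness of E
  have hnE : Nonempty E := by
    haveI := hμprob 0 (Nat.zero_le n)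
    by_contra hne
    rw [not_nonempty_iff] at hne
    have h1 : μ 0 Set.univ = 1 := measure_univ
    rw [Set.univ_eq_empty_iff.2 hne, measure_empty] at h1
    exact zero_ne_one h1
  -- basic positivity facts
  have hF0 : ∀ km k', km ≤ n → k' ≤ n → ∀ i : I k', μ km (F k' i) ≠ 0 := by
    intro km k' hkm hk' i h0
    exact (hFpos k' hk' i).ne' (hμac 0 km (Nat.zero_le n) hkm h0)
  have hFt : ∀ km, km ≤ n → ∀ S : Set E, μ km S ≠ ⊤ := by
    intro km hkm S
    haveI := hμprob km hkm
    exact measure_ne_top _ _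
  have hm_pos : ∀ j, j < n → ∀ i : I j, 0 < mRatio μ F j i := by
    intro j hjn i
    exact div_pos (ENNReal.toReal_pos (hF0 (j+1) j hjn hjn.le i) (hFt (j+1) hjn _))
      (ENNReal.toReal_pos (hF0 j j hjn.le hjn.le i) (hFt j hjn.le _))
  have hZpos : ∀ j, j ≤ n → 0 < ∫ z, g j z ∂ μ j := by
    intro j hj
    haveI := hμprob j hj
    obtain ⟨Cg, hCg⟩ := hgbdd j
    have hint : Integrable (g j) (μ j) :=
      aux_int_bdd (hgmeas j) (C := Cg) fun x => by
        rw [abs_of_pos (hgpos j x)]; exact hCg x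
    rw [MeasureTheory.integral_pos_iff_support_of_nonneg (fun x => (hgpos j x).le) hint]
    have hsupp : Function.support (g j) = Set.univ :=
      Set.eq_univ_of_forall fun x => (hgpos j x).ne'
    rw [hsupp, measure_univ]
    exact zero_lt_one
  -- measurability and boundedness of the propagators
  have hqmb : ∀ d j k, k = j + d → k ≤ n → ∀ f : E → ℝ, Measurable f →
      (∃ C, ∀ x, |f x| ≤ C) →
      Measurable (qhat j k f) ∧ ∃ C, 0 ≤ C ∧ ∀ x, |qhat j k f x| ≤ C := by
    intro d
    induction d with
    | zero =>
      intro j k hk hkn f hf hfb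
      obtain ⟨C, hC⟩ := hfb
      obtain ⟨x0⟩ := hnE
      have hkj : k = j := by omega
      subst hkj
      rw [hqdiag]
      exact ⟨hf, C, (abs_nonneg _).trans (hC x0), hC⟩
    | succ d ih =>
      intro j k hk hkn f hf hfb
      have hjk : j < k := by omega
      obtain ⟨hum, Cu, hCu0, hCu⟩ := ih (j+1) k (by omega) hkn f hf hfb
      obtain ⟨Cg, hCg⟩ := hgbdd j
      obtain ⟨x0⟩ := hnE
      have hCg0 : 0 ≤ Cg := (hgpos j x0).le.trans (hCg x0)
      have hZ0 : 0 < ∫ z, g j z ∂ μ j := hZpos j (by omega)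
      set w : E → ℝ := fun y => (g j y / ∫ z, g j z ∂ μ j) * qhat (j+1) k f y with hwdef
      have hwm : Measurable w := ((hgmeas j).div_const _).mul hum
      have hwb : ∀ y, |w y| ≤ (Cg / ∫ z, g j z ∂ μ j) * Cu := by
        intro y
        rw [abs_mul]
        refine mul_le_mul ?_ (hCu y) (abs_nonneg _) (div_nonneg hCg0 hZ0.le)
        rw [abs_of_nonneg (div_nonneg (hgpos j y).le hZ0.le), div_eq_mul_inv, div_eq_mul_inv]
        exact mul_le_mul_of_nonneg_right (hCg y) (inv_nonneg.2 hZ0.le)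
      have heq : qhat j k f = fun x => ∫ y, w y ∂ K j x := funext fun x => hqstep j k hjk hkn f x
      constructor
      · rw [heq]
        have hκm : Measurable (K j) :=
          Measure.measurable_of_measurable_coe _ (fun s hs => hKmeas j s hs)
        set κ : ProbabilityTheory.Kernel E E := ⟨K j, hκm⟩ with hκdef
        haveI : ProbabilityTheory.IsMarkovKernel κ := ⟨fun x => hKprob j x⟩
        have hsm : StronglyMeasurable (Function.uncurry fun (_ : E) (y : E) => w y) :=
          (hwm.comp measurable_snd).stronglyMeasurable
        exact (MeasureTheory.StronglyMeasurable.integral_kernel_prod_right (κ := κ) hsm).measurable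
      · refine ⟨(Cg / ∫ z, g j z ∂ μ j) * Cu,
          mul_nonneg (div_nonneg hCg0 hZ0.le) hCu0, fun x => ?_⟩
        rw [heq]
        haveI := hKprob j x
        have hb := MeasureTheory.norm_integral_le_of_norm_le_const (μ := K j x) (f := w)
          (C := (Cg / ∫ z, g j z ∂ μ j) * Cu)
          (Filter.Eventually.of_forall fun y => by
            simpa [Real.norm_eq_abs] using hwb y)
        simpa [Real.norm_eq_abs, measure_univ] using hb
  -- the kernels stay inside the cells
  have hKsupp : ∀ j, 1 ≤ j → j ≤ n → ∀ (i : I j) (x : E), x ∈ F j i →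
      ∀ᵐ y ∂ K j x, y ∈ F j i := by
    intro j hj1 hjn i x hx
    have hcomp : K j x ((F j i)ᶜ) = 0 := by
      have hsub : (F j i)ᶜ ⊆ ⋃ i' : {a : I j // a ≠ i}, F j i'.1 := by
        intro y hy
        have hyu : y ∈ ⋃ i', F j i' := by rw [hFcover j hjn]; exact Set.mem_univ y
        obtain ⟨i', hy'⟩ := Set.mem_iUnion.1 hyu
        refine Set.mem_iUnion.2 ⟨⟨i', fun he => ?_⟩, hy'⟩
        exact hy (he ▸ hy')
      refine measure_mono_null hsub (measure_iUnion_null fun i' => ?_)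
      refine hD j hj1 hjn i'.1 x fun hxF => ?_
      exact Set.disjoint_left.mp (hFdisj j hjn i'.1 i i'.2) hxF hx
    rw [MeasureTheory.ae_iff]
    exact hcomp
  -- the normalized densities are bounded on cells
  have hgbar_le : ∀ j, j < n → ∀ (i : I j) (y : E), y ∈ F j i →
      g j y / (∫ z, g j z ∂ μ j) ≤ γ * mRatio μ F j i := by
    intro j hjn i y hy
    have hBj := hB j hjn i y hy
    have haj : 0 < (μ j (F j i)).toReal :=
      ENNReal.toReal_pos (hF0 j j hjn.le hjn.le i) (hFt j hjn.le _)
    have hbj : 0 < (μ (j+1) (F j i)).toReal :=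
      ENNReal.toReal_pos (hF0 (j+1) j hjn hjn.le i) (hFt (j+1) hjn _)
    rw [div_mul_eq_mul_div, div_le_iff₀ hbj] at hBj
    simp only [mRatio]
    rw [← mul_div_assoc, le_div_iff₀ haj, mul_comm]
    exact hBj
  -- cells are nonempty, predecessors compose
  have hFne : ∀ k, k ≤ n → ∀ l : I k, (F k l).Nonempty := fun k hk l =>
    MeasureTheory.nonempty_of_measure_ne_zero (hFpos k hk l).ne'
  have pcomp : ∀ j k, j+1 < k → k ≤ n → ∀ l : I k, p j k l = p j (j+1) (p (j+1) k l) := by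
    intro j k hjk hkn l
    obtain ⟨x, hx⟩ := hFne k hkn l
    have h1 : x ∈ F j (p j k l) := hp j k (by omega) hkn l hx
    have h2 : x ∈ F j (p j (j+1) (p (j+1) k l)) :=
      hp j (j+1) (Nat.lt_succ_self j) (by omega) _ (hp (j+1) k (by omega) hkn l hx)
    by_contra hne
    exact Set.disjoint_left.mp (hFdisj j (by omega) _ _ hne) h1 h2
  have mem_succ : ∀ (j k : ℕ) (i : I j) (l : I k), l ∈ succSet p j k i ↔ p j k l = i := by
    intro j k i l
    simp [succSet]
  have succ_subset : ∀ j k, j+1 < k → k ≤ n → ∀ (i : I j) (l₁ : I (j+1)),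
      l₁ ∈ succSet p j (j+1) i → succSet p (j+1) k l₁ ⊆ succSet p j k i := by
    intro j k hjk hkn i l₁ hl₁ l hl
    have h1 := (mem_succ _ _ _ _).1 hl₁
    have h2 := (mem_succ _ _ _ _).1 hl
    refine (mem_succ _ _ _ _).2 ?_
    rw [pcomp j k hjk hkn l, h2, h1]
  have hcover_child : ∀ j (hjn : j < n) (i : I j),
      F j i = ⋃ l ∈ succSet p j (j+1) i, F (j+1) l := by
    intro j hjn i
    apply Set.Subset.antisymm
    · intro x hx
      have hxu : x ∈ ⋃ l : I (j+1), F (j+1) l := by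
        rw [hFcover (j+1) hjn]; exact Set.mem_univ x
      obtain ⟨l, hl⟩ := Set.mem_iUnion.1 hxu
      have hpl : p j (j+1) l = i := by
        by_contra hne
        exact Set.disjoint_left.mp (hFdisj j (by omega) _ i hne)
          (hp j (j+1) (Nat.lt_succ_self j) hjn l hl) hx
      exact Set.mem_iUnion₂.2 ⟨l, (mem_succ _ _ _ _).2 hpl, hl⟩
    · intro x hx
      obtain ⟨l, hls, hlx⟩ := Set.mem_iUnion₂.1 hx
      have hpl : p j (j+1) l = i := (mem_succ _ _ _ _).1 hls
      exact hpl ▸ hp j (j+1) (Nat.lt_succ_self j) hjn l hlx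
  -- splitting local norms over subcells
  have SPLIT : ∀ j (hjn : j < n), ∀ (i : I j) (u : E → ℝ), Measurable u → ∀ C : ℝ,
      (∀ x, |u x| ≤ C) → ∀ q : ℝ, 0 < q →
      locNorm (muLoc (μ (j+1)) (F j i)) q u
        ≤ (succSet p j (j+1) i).sup' (hsne j (j+1) (Nat.lt_succ_self j) hjn i)
            fun l => locNorm (muLoc (μ (j+1)) (F (j+1) l)) q u := by
    intro j hjn i u hum C hub q hq
    haveI : IsProbabilityMeasure (μ (j+1)) := hμprob (j+1) hjn
    refine aux_split _ (hsne j (j+1) (Nat.lt_succ_self j) hjn i) (F (j+1)) (F j i)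
      (fun l => hFmeas (j+1) l) ?_ (hcover_child j hjn i) ?_ hum hub hq
    · intro l hl l' hl' hne
      exact hFdisj (j+1) hjn l l' hne
    · intro l hl
      exact hF0 (j+1) (j+1) hjn hjn l
  -- exponents
  have hpreal0 : (0:ℝ) < preal := lt_of_lt_of_le one_pos hpreal
  have hP2 : (0:ℝ) < 2*preal := by linarith
  have hγ0 : (0:ℝ) < γ := lt_of_lt_of_le one_pos hγ
  -- the one-step L^{2p} estimate
  have STEP : ∀ j, 1 ≤ j → j < n → ∀ i : I j, ∀ h : E → ℝ, Measurable h →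
      (∃ C, ∀ x, |h x| ≤ C) →
      locNorm (muLoc (μ j) (F j i)) (2*preal) (qhat j (j+1) h) ^ (2*preal)
        ≤ γ ^ (2*preal-2) * mRatio μ F j i ^ (2*preal) *
          (α * locNorm (muLoc (μ (j+1)) (F j i)) (2*preal) h ^ (2*preal)
            + β * locNorm (muLoc (μ (j+1)) (F j i)) preal h ^ (2*preal)) := by
    intro j hj1 hjn i h hhm hhbdd
    obtain ⟨Ch, hCh⟩ := hhbdd
    haveI hPj : IsProbabilityMeasure (μ j) := hμprob j hjn.le
    haveI hPj1 : IsProbabilityMeasure (μ (j+1)) := hμprob (j+1) hjn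
    have hjn' : j + 1 ≤ n := hjn
    have hmpos : 0 < mRatio μ F j i := hm_pos j hjn i
    have hc0 : 0 < γ * mRatio μ F j i := mul_pos hγ0 hmpos
    have hZ0 : 0 < ∫ z, g j z ∂ μ j := hZpos j hjn.le
    set w : E → ℝ := fun y => g j y / ∫ z, g j z ∂ μ j with hwdef
    have hw0 : ∀ y, 0 ≤ w y := fun y => div_nonneg (hgpos j y).le hZ0.le
    have hwm : Measurable w := (hgmeas j).div_const _
    obtain ⟨Cg, hCg⟩ := hgbdd j
    have hwb : ∀ y, w y ≤ Cg / ∫ z, g j z ∂ μ j := by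
      intro y
      simp only [hwdef]
      rw [div_eq_mul_inv, div_eq_mul_inv]
      exact mul_le_mul_of_nonneg_right (hCg y) (inv_nonneg.2 hZ0.le)
    set φ : E → ℝ := fun y => |h y| ^ preal with hφdef
    have hφm : Measurable φ := hhm.abs.pow_const preal
    have hφb : ∀ x, |φ x| ≤ |Ch| ^ preal := aux_rpow_bdd (by linarith) hCh
    have hq1 : ∀ u : E → ℝ, qhat j (j+1) u = fun x => ∫ y, w y * u y ∂ K j x := by
      intro u
      funext x
      rw [hqstep j (j+1) (Nat.lt_succ_self j) hjn' u x]
      simp only [hqdiag]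
      rfl
    have hφq0 : ∀ x, 0 ≤ qhat j (j+1) φ x := by
      intro x
      rw [hq1 φ]
      exact integral_nonneg fun y => mul_nonneg (hw0 y) (Real.rpow_nonneg (abs_nonneg _) _)
    have hpt : ∀ x ∈ F j i, |qhat j (j+1) h x| ^ (2*preal)
        ≤ (γ * mRatio μ F j i) ^ (2*preal-2) * qhat j (j+1) φ x ^ (2:ℝ) := by
      intro x hx
      haveI := hKprob j x
      have hwc : ∀ᵐ y ∂ K j x, w y ≤ γ * mRatio μ F j i :=
        (hKsupp j hj1 hjn.le i x hx).mono fun y hy => hgbar_le j hjn i y hy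
      have hH := aux_holder hwm hw0 hwb hhm hCh hc0 hwc hpreal
      have habs : |qhat j (j+1) h x| ≤ ∫ y, w y * |h y| ∂ K j x := by
        rw [hq1 h]
        calc |∫ y, w y * h y ∂ K j x| ≤ ∫ y, |w y| * |h y| ∂ K j x := by
              simpa [Real.norm_eq_abs, abs_mul] using
                MeasureTheory.norm_integral_le_integral_norm (μ := K j x) (fun y => w y * h y)
          _ = ∫ y, w y * |h y| ∂ K j x := by
              refine integral_congr_ae (Filter.Eventually.of_forall fun y => ?_)
              show |w y| * |h y| = w y * |h y|
              rw [abs_of_nonneg (hw0 y)]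
      have hchain : |qhat j (j+1) h x|
          ≤ (γ * mRatio μ F j i) ^ (1-1/preal) * qhat j (j+1) φ x ^ (1/preal) := by
        refine habs.trans (hH.trans ?_)
        rw [hq1 φ]
      calc |qhat j (j+1) h x| ^ (2*preal)
          ≤ ((γ * mRatio μ F j i) ^ (1-1/preal) * qhat j (j+1) φ x ^ (1/preal)) ^ (2*preal) :=
            Real.rpow_le_rpow (abs_nonneg _) hchain hP2.le
        _ = (γ * mRatio μ F j i) ^ (2*preal-2) * qhat j (j+1) φ x ^ (2:ℝ) := by
            rw [Real.mul_rpow (Real.rpow_nonneg hc0.le _) (Real.rpow_nonneg (hφq0 x) _),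
              ← Real.rpow_mul hc0.le, ← Real.rpow_mul (hφq0 x)]
            congr 1
            · congr 1
              field_simp
            · congr 1
              field_simp
    have hS0 : μ j (F j i) ≠ 0 := hF0 j j hjn.le hjn.le i
    have hSt : μ j (F j i) ≠ ⊤ := hFt j hjn.le _
    haveI hPloc : IsProbabilityMeasure (muLoc (μ j) (F j i)) := aux_isProb_muLoc hS0 hSt
    haveI hPloc1 : IsProbabilityMeasure (muLoc (μ (j+1)) (F j i)) :=
      aux_isProb_muLoc (hF0 (j+1) j hjn hjn.le i) (hFt (j+1) hjn _)
    obtain ⟨hqhm, Cq, hCq0, hCqb⟩ := hqmb 1 j (j+1) rfl hjn' h hhm ⟨Ch, hCh⟩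
    obtain ⟨hqφm, Cqφ, hCqφ0, hCqφb⟩ := hqmb 1 j (j+1) rfl hjn' φ hφm ⟨|Ch| ^ preal, hφb⟩
    have hIle : ∫ x, |qhat j (j+1) h x| ^ (2*preal) ∂ muLoc (μ j) (F j i)
        ≤ (γ * mRatio μ F j i) ^ (2*preal-2)
            * ∫ x, qhat j (j+1) φ x ^ (2:ℝ) ∂ muLoc (μ j) (F j i) := by
      rw [← MeasureTheory.integral_const_mul]
      refine integral_mono_ae ?_ ?_ ?_
      · exact aux_int_bdd (aux_rpow_meas hqhm hP2.le) (aux_rpow_bdd hP2.le hCqb)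
      · refine aux_int_bdd (measurable_const.mul (hqφm.pow_const (2:ℝ)))
          (C := |(γ * mRatio μ F j i) ^ (2*preal-2)| * |Cqφ| ^ (2:ℝ)) fun x => ?_
        rw [abs_mul]
        refine mul_le_mul le_rfl ?_ (abs_nonneg _) (abs_nonneg _)
        have : qhat j (j+1) φ x ^ (2:ℝ) = |qhat j (j+1) φ x| ^ (2:ℝ) := by
          rw [abs_of_nonneg (hφq0 x)]
        rw [this]
        exact aux_rpow_bdd (by norm_num) hCqφb x
      · have h1 : ∀ᵐ x ∂ (μ j).restrict (F j i),
            |qhat j (j+1) h x| ^ (2*preal)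
              ≤ (γ * mRatio μ F j i) ^ (2*preal-2) * qhat j (j+1) φ x ^ (2:ℝ) :=
          (ae_restrict_mem (hFmeas j i)).mono fun x hx => hpt x hx
        exact Measure.ae_smul_measure h1 _
    have hMstep := hM j hj1 hjn i φ hφm ⟨|Ch| ^ preal, hφb⟩
    have idL : locNorm (muLoc (μ j) (F j i)) (2*preal) (qhat j (j+1) h) ^ (2*preal)
        = ∫ x, |qhat j (j+1) h x| ^ (2*preal) ∂ muLoc (μ j) (F j i) :=
      aux_locNorm_rpow _ hP2
    have id1 : locNorm (muLoc (μ j) (F j i)) 2 (qhat j (j+1) φ) ^ (2:ℕ)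
        = ∫ x, qhat j (j+1) φ x ^ (2:ℝ) ∂ muLoc (μ j) (F j i) := by
      rw [← Real.rpow_two, aux_locNorm_rpow _ (by norm_num : (0:ℝ) < 2)]
      refine integral_congr_ae (Filter.Eventually.of_forall fun x => ?_)
      show |qhat j (j+1) φ x| ^ (2:ℝ) = qhat j (j+1) φ x ^ (2:ℝ)
      rw [abs_of_nonneg (hφq0 x)]
    have id2 : locNorm (muLoc (μ (j+1)) (F j i)) 2 φ ^ (2:ℕ)
        = locNorm (muLoc (μ (j+1)) (F j i)) (2*preal) h ^ (2*preal) := by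
      rw [← Real.rpow_two, aux_locNorm_rpow _ (by norm_num : (0:ℝ) < 2),
        aux_locNorm_rpow _ hP2]
      refine integral_congr_ae (Filter.Eventually.of_forall fun x => ?_)
      show |φ x| ^ (2:ℝ) = |h x| ^ (2*preal)
      have hφx : φ x = |h x| ^ preal := rfl
      rw [hφx, abs_of_nonneg (Real.rpow_nonneg (abs_nonneg _) _),
        ← Real.rpow_mul (abs_nonneg (h x)), mul_comm preal 2]
    have id3 : (∫ x, φ x ∂ muLoc (μ (j+1)) (F j i)) ^ (2:ℕ)
        = locNorm (muLoc (μ (j+1)) (F j i)) preal h ^ (2*preal) := by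
      have e1 : ∫ x, φ x ∂ muLoc (μ (j+1)) (F j i)
          = locNorm (muLoc (μ (j+1)) (F j i)) preal h ^ preal :=
        (aux_locNorm_rpow _ hpreal0).symm
      rw [e1, ← Real.rpow_two, ← Real.rpow_mul (aux_locNorm_nonneg _ _ _)]
      congr 1
      ring
    have hcm : (γ * mRatio μ F j i) ^ (2*preal-2) * mRatio μ F j i ^ (2:ℕ)
        = γ ^ (2*preal-2) * mRatio μ F j i ^ (2*preal) := by
      rw [Real.mul_rpow hγ0.le hmpos.le, ← Real.rpow_two, mul_assoc,
        ← Real.rpow_add hmpos]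
      congr 2
      ring
    rw [idL]
    refine hIle.trans ?_
    rw [← id1]
    have hMstep' := mul_le_mul_of_nonneg_left hMstep (Real.rpow_nonneg hc0.le (2*preal-2))
    refine hMstep'.trans (le_of_eq ?_)

    calc (γ * mRatio μ F j i) ^ (2*preal-2) * (mRatio μ F j i ^ 2 *
            (α * locNorm (muLoc (μ (j+1)) (F j i)) 2 φ ^ 2
              + β * (∫ x, φ x ∂ muLoc (μ (j+1)) (F j i)) ^ 2))
        = ((γ * mRatio μ F j i) ^ (2*preal-2) * mRatio μ F j i ^ (2:ℕ)) *
            (α * locNorm (muLoc (μ (j+1)) (F j i)) 2 φ ^ 2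
              + β * (∫ x, φ x ∂ muLoc (μ (j+1)) (F j i)) ^ 2) := by ring
      _ = γ ^ (2*preal-2) * mRatio μ F j i ^ (2*preal) *
            (α * locNorm (muLoc (μ (j+1)) (F j i)) 2 φ ^ 2
              + β * (∫ x, φ x ∂ muLoc (μ (j+1)) (F j i)) ^ 2) := by rw [hcm]
      _ = γ ^ (2*preal-2) * mRatio μ F j i ^ (2*preal) *
            (α * locNorm (muLoc (μ (j+1)) (F j i)) (2*preal) h ^ (2*preal)
              + β * locNorm (muLoc (μ (j+1)) (F j i)) preal h ^ (2*preal)) := by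
            rw [id2, id3]
  -- combinatorics of mass ratios
  have Mprod_nonneg : ∀ (j k : ℕ) (l : I k), 0 ≤ Mprod μ F p j k l := by
    intro j k l
    refine Finset.prod_nonneg fun r _ => ?_
    exact div_nonneg ENNReal.toReal_nonneg ENNReal.toReal_nonneg
  have MM_nonneg : ∀ (j k : ℕ) (hjk : j < k) (hkn : k ≤ n) (i : I j),
      0 ≤ (succSet p j k i).sup' (hsne j k hjk hkn i) (Mprod μ F p j k) := by
    intro j k hjk hkn i
    obtain ⟨l, hl⟩ := hsne j k hjk hkn i
    exact (Mprod_nonneg j k l).trans (Finset.le_sup' _ hl)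
  have Mprod_split : ∀ (j k : ℕ), j < k → ∀ l : I k,
      Mprod μ F p j k l = mRatio μ F j (p j k l) * Mprod μ F p (j+1) k l := by
    intro j k hjk l
    simp only [Mprod]
    exact Finset.prod_eq_prod_Ico_succ_bot hjk _
  have M_base : ∀ j (hjn : j < n) (i : I j),
      (succSet p j (j+1) i).sup' (hsne j (j+1) (Nat.lt_succ_self j) hjn i)
        (Mprod μ F p j (j+1)) = mRatio μ F j i := by
    intro j hjn i
    apply le_antisymm
    · refine Finset.sup'_le _ _ fun l hl => ?_
      rw [Mprod_split j (j+1) (Nat.lt_succ_self j) l, (mem_succ _ _ _ _).1 hl]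
      have h1 : Mprod μ F p (j+1) (j+1) l = 1 := by simp [Mprod]
      rw [h1, mul_one]
    · obtain ⟨l, hl⟩ := hsne j (j+1) (Nat.lt_succ_self j) hjn i
      refine Finset.le_sup'_of_le _ hl ?_
      rw [Mprod_split j (j+1) (Nat.lt_succ_self j) l, (mem_succ _ _ _ _).1 hl]
      have h1 : Mprod μ F p (j+1) (j+1) l = 1 := by simp [Mprod]
      rw [h1, mul_one]
  have key_M : ∀ (j k : ℕ) (hjk : j+1 < k) (hkn : k ≤ n) (i : I j) (l₁ : I (j+1)),
      l₁ ∈ succSet p j (j+1) i →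
      mRatio μ F j i * (succSet p (j+1) k l₁).sup' (hsne (j+1) k hjk hkn l₁)
          (Mprod μ F p (j+1) k)
        ≤ (succSet p j k i).sup' (hsne j k (by omega) hkn i) (Mprod μ F p j k) := by
    intro j k hjk hkn i l₁ hl₁
    obtain ⟨l, hl, hEq⟩ := Finset.exists_mem_eq_sup' (hsne (j+1) k hjk hkn l₁)
      (Mprod μ F p (j+1) k)
    rw [hEq]
    have hlmem : l ∈ succSet p j k i := succ_subset j k hjk hkn i l₁ hl₁ hl
    have h1 : mRatio μ F j i * Mprod μ F p (j+1) k l = Mprod μ F p j k l := by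
      rw [Mprod_split j k (by omega) l, (mem_succ _ _ _ _).1 hlmem]
    rw [h1]
    exact Finset.le_sup' _ hlmem
  -- the constants
  have hap : 0 < α * γ ^ (2*preal-2) := mul_pos hα (Real.rpow_pos_of_pos hγ0 _)
  have h1a : 0 < 1 - α * γ ^ (2*preal-2) := by linarith [hsmall]
  set δ2 : ℝ := δp * γ ^ (1 - 1/preal) / (1 - α * γ ^ (2*preal - 2)) ^ (1/(2*preal)) with hδ2def
  have hδp0 : (0:ℝ) < δp := lt_of_lt_of_le one_pos hδp
  have hden_pos : 0 < (1 - α*γ^(2*preal-2)) ^ (1/(2*preal)) := Real.rpow_pos_of_pos h1a _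
  have hden_le1 : (1 - α*γ^(2*preal-2)) ^ (1/(2*preal)) ≤ 1 :=
    Real.rpow_le_one h1a.le (by linarith [hap]) (by positivity)
  have hγe1 : 1 ≤ γ ^ (1 - 1/preal) :=
    Real.one_le_rpow hγ (by rw [sub_nonneg, div_le_one hpreal0]; exact hpreal)
  have hδ2_ge : δp ≤ δ2 := by
    rw [hδ2def, le_div_iff₀ hden_pos]
    calc δp * (1 - α*γ^(2*preal-2)) ^ (1/(2*preal)) ≤ δp * 1 :=
          mul_le_mul_of_nonneg_left hden_le1 hδp0.le
      _ = δp := mul_one δp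
      _ ≤ δp * γ ^ (1 - 1/preal) := le_mul_of_one_le_right hδp0.le hγe1
  have hδ2_1 : 1 ≤ δ2 := hδp.trans hδ2_ge
  have hδ2_0 : (0:ℝ) < δ2 := lt_of_lt_of_le one_pos hδ2_1
  have hδ2pow : δ2 ^ (2*preal) = δp ^ (2*preal) * γ ^ (2*preal-2) / (1 - α*γ^(2*preal-2)) := by
    rw [hδ2def, Real.div_rpow (by positivity) hden_pos.le,
      Real.mul_rpow hδp0.le (Real.rpow_nonneg hγ0.le _),
      ← Real.rpow_mul hγ0.le, ← Real.rpow_mul h1a.le]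
    rw [show (1-1/preal)*(2*preal) = 2*preal-2 by field_simp,
      show (1/(2*preal))*(2*preal) = 1 by field_simp, Real.rpow_one]
  have hconst : γ ^ (2*preal-2) * (α * δ2 ^ (2*preal) + β * δp ^ (2*preal)) ≤ δ2 ^ (2*preal) := by
    have hγe0 : 0 < γ ^ (2*preal-2) := Real.rpow_pos_of_pos hγ0 _
    have hδ2p0 : 0 ≤ δ2 ^ (2*preal) := Real.rpow_nonneg hδ2_0.le _
    have hδpp0 : 0 ≤ δp ^ (2*preal) := Real.rpow_nonneg hδp0.le _
    have hkey : γ^(2*preal-2) * δp^(2*preal) = (1 - α*γ^(2*preal-2)) * δ2^(2*preal) := by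
      rw [hδ2pow, mul_div_assoc', mul_div_cancel_left₀ _ h1a.ne']
      ring
    have hb1 : γ^(2*preal-2) * (β * δp^(2*preal)) ≤ (1 - α*γ^(2*preal-2)) * δ2^(2*preal) := by
      rw [← hkey]
      have h2 : β * δp^(2*preal) ≤ δp^(2*preal) := by nlinarith [hδpp0]
      nlinarith [hγe0.le, h2]
    nlinarith [hb1, hγe0]
  -- the assembly step
  have ASM : ∀ (j k : ℕ) (hjk : j < k) (hkn : k ≤ n), 1 ≤ j → ∀ f : E → ℝ, Measurable f →
      (∃ C, ∀ x, |f x| ≤ C) → ∀ (i : I j) (X : ℝ), 0 ≤ X → ∀ W : I (j+1) → ℝ,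
      (∀ l₁, 0 ≤ W l₁) →
      (∀ l₁ ∈ succSet p j (j+1) i,
        locNorm (muLoc (μ (j+1)) (F (j+1) l₁)) (2*preal) (qhat (j+1) k f) ≤ W l₁ * δ2 * X) →
      (∀ l₁ ∈ succSet p j (j+1) i,
        locNorm (muLoc (μ (j+1)) (F (j+1) l₁)) preal (qhat (j+1) k f) ≤ W l₁ * δp * X) →
      (∀ l₁ ∈ succSet p j (j+1) i,
        mRatio μ F j i * W l₁
          ≤ (succSet p j k i).sup' (hsne j k hjk hkn i) (Mprod μ F p j k)) →
      locNorm (muLoc (μ j) (F j i)) (2*preal) (qhat j k f)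
        ≤ (succSet p j k i).sup' (hsne j k hjk hkn i) (Mprod μ F p j k) * δ2 * X := by
    intro j k hjk hkn hj1 f hf hfb i X hX W hW0 hW2 hW1 hWM
    have hjn : j < n := by omega
    have hj1n : j + 1 ≤ n := by omega
    obtain ⟨hhm, Ch, hCh0, hChb⟩ := hqmb (k - (j+1)) (j+1) k (by omega) hkn f hf hfb
    have hq_eq : qhat j k f = qhat j (j+1) (qhat (j+1) k f) := by
      funext x
      rw [hqstep j k hjk hkn f x, hqstep j (j+1) (Nat.lt_succ_self j) hj1n (qhat (j+1) k f) x]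
      simp only [hqdiag]
    have hm0 : 0 < mRatio μ F j i := hm_pos j hjn i
    have hM0 : 0 ≤ (succSet p j k i).sup' (hsne j k hjk hkn i) (Mprod μ F p j k) :=
      MM_nonneg j k hjk hkn i
    have hs1ne : (succSet p j (j+1) i).Nonempty := hsne j (j+1) (Nat.lt_succ_self j) hjn i
    set Wm := (succSet p j (j+1) i).sup' hs1ne W with hWmdef
    have hWm0 : 0 ≤ Wm := by
      obtain ⟨l₁, hl₁⟩ := hs1ne
      exact (hW0 l₁).trans (Finset.le_sup' _ hl₁)
    have hmWM : mRatio μ F j i * Wm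
        ≤ (succSet p j k i).sup' (hsne j k hjk hkn i) (Mprod μ F p j k) := by
      obtain ⟨l₁, hl₁, hEq⟩ := Finset.exists_mem_eq_sup' hs1ne W
      rw [hWmdef, hEq]
      exact hWM l₁ hl₁
    have hA : locNorm (muLoc (μ (j+1)) (F j i)) (2*preal) (qhat (j+1) k f) ≤ Wm * δ2 * X := by
      refine (SPLIT j hjn i (qhat (j+1) k f) hhm Ch hChb (2*preal) hP2).trans ?_
      refine Finset.sup'_le _ _ fun l₁ hl₁ => (hW2 l₁ hl₁).trans ?_
      exact mul_le_mul_of_nonneg_right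
        (mul_le_mul_of_nonneg_right (Finset.le_sup' _ hl₁) hδ2_0.le) hX
    have hB : locNorm (muLoc (μ (j+1)) (F j i)) preal (qhat (j+1) k f) ≤ Wm * δp * X := by
      refine (SPLIT j hjn i (qhat (j+1) k f) hhm Ch hChb preal hpreal0).trans ?_
      refine Finset.sup'_le _ _ fun l₁ hl₁ => (hW1 l₁ hl₁).trans ?_
      exact mul_le_mul_of_nonneg_right
        (mul_le_mul_of_nonneg_right (Finset.le_sup' _ hl₁) hδp0.le) hX
    have hstep := STEP j hj1 hjn i (qhat (j+1) k f) hhm ⟨Ch, hChb⟩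
    rw [hq_eq]
    have hL0 : 0 ≤ locNorm (muLoc (μ j) (F j i)) (2*preal) (qhat j (j+1) (qhat (j+1) k f)) :=
      aux_locNorm_nonneg _ _ _
    have hRHS0 : 0 ≤ (succSet p j k i).sup' (hsne j k hjk hkn i) (Mprod μ F p j k) * δ2 * X :=
      mul_nonneg (mul_nonneg hM0 hδ2_0.le) hX
    refine (Real.rpow_le_rpow_iff hL0 hRHS0 hP2).1 ?_
    have hA0 := aux_locNorm_nonneg (muLoc (μ (j+1)) (F j i)) (2*preal) (qhat (j+1) k f)
    have hB0 := aux_locNorm_nonneg (muLoc (μ (j+1)) (F j i)) preal (qhat (j+1) k f)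
    have hA2 := Real.rpow_le_rpow hA0 hA hP2.le
    have hB2 := Real.rpow_le_rpow hB0 hB hP2.le
    have hexp1 : (Wm*δ2*X)^(2*preal) = Wm^(2*preal) * δ2^(2*preal) * X^(2*preal) := by
      rw [Real.mul_rpow (mul_nonneg hWm0 hδ2_0.le) hX, Real.mul_rpow hWm0 hδ2_0.le]
    have hexp2 : (Wm*δp*X)^(2*preal) = Wm^(2*preal) * δp^(2*preal) * X^(2*preal) := by
      rw [Real.mul_rpow (mul_nonneg hWm0 hδp0.le) hX, Real.mul_rpow hWm0 hδp0.le]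
    have hexp3 : ((succSet p j k i).sup' (hsne j k hjk hkn i) (Mprod μ F p j k) * δ2 * X)^(2*preal)
        = ((succSet p j k i).sup' (hsne j k hjk hkn i) (Mprod μ F p j k))^(2*preal)
          * δ2^(2*preal) * X^(2*preal) := by
      rw [Real.mul_rpow (mul_nonneg hM0 hδ2_0.le) hX, Real.mul_rpow hM0 hδ2_0.le]
    have hmW : mRatio μ F j i ^(2*preal) * Wm^(2*preal)
        ≤ ((succSet p j k i).sup' (hsne j k hjk hkn i) (Mprod μ F p j k))^(2*preal) := by
      rw [← Real.mul_rpow hm0.le hWm0]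
      exact Real.rpow_le_rpow (mul_nonneg hm0.le hWm0) hmWM hP2.le
    rw [hexp1] at hA2
    rw [hexp2] at hB2
    rw [hexp3]
    refine hstep.trans ?_
    have hγm0 : 0 ≤ γ ^ (2*preal-2) * mRatio μ F j i ^ (2*preal) :=
      mul_nonneg (Real.rpow_nonneg hγ0.le _) (Real.rpow_nonneg hm0.le _)
    have hmid : α * locNorm (muLoc (μ (j+1)) (F j i)) (2*preal) (qhat (j+1) k f) ^ (2*preal)
          + β * locNorm (muLoc (μ (j+1)) (F j i)) preal (qhat (j+1) k f) ^ (2*preal)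
        ≤ α * (Wm^(2*preal) * δ2^(2*preal) * X^(2*preal))
          + β * (Wm^(2*preal) * δp^(2*preal) * X^(2*preal)) :=
      add_le_add (mul_le_mul_of_nonneg_left hA2 hα.le) (mul_le_mul_of_nonneg_left hB2 hβ0)
    have hWX0 : 0 ≤ mRatio μ F j i ^(2*preal) * Wm^(2*preal) * X^(2*preal) :=
      mul_nonneg (mul_nonneg (Real.rpow_nonneg hm0.le _) (Real.rpow_nonneg hWm0 _))
        (Real.rpow_nonneg hX _)
    calc γ ^ (2*preal-2) * mRatio μ F j i ^ (2*preal) *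
            (α * locNorm (muLoc (μ (j+1)) (F j i)) (2*preal) (qhat (j+1) k f) ^ (2*preal)
              + β * locNorm (muLoc (μ (j+1)) (F j i)) preal (qhat (j+1) k f) ^ (2*preal))
        ≤ γ ^ (2*preal-2) * mRatio μ F j i ^ (2*preal) *
            (α * (Wm^(2*preal) * δ2^(2*preal) * X^(2*preal))
              + β * (Wm^(2*preal) * δp^(2*preal) * X^(2*preal))) :=
          mul_le_mul_of_nonneg_left hmid hγm0
      _ = (mRatio μ F j i ^(2*preal) * Wm^(2*preal) * X^(2*preal))
            * (γ ^ (2*preal-2) * (α * δ2^(2*preal) + β * δp^(2*preal))) := by ring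
      _ ≤ (mRatio μ F j i ^(2*preal) * Wm^(2*preal) * X^(2*preal)) * δ2^(2*preal) :=
          mul_le_mul_of_nonneg_left hconst hWX0
      _ = (mRatio μ F j i ^(2*preal) * Wm^(2*preal)) * δ2^(2*preal) * X^(2*preal) := by ring
      _ ≤ ((succSet p j k i).sup' (hsne j k hjk hkn i) (Mprod μ F p j k))^(2*preal)
            * δ2^(2*preal) * X^(2*preal) := by
          refine mul_le_mul_of_nonneg_right
            (mul_le_mul_of_nonneg_right hmW (Real.rpow_nonneg hδ2_0.le _))
            (Real.rpow_nonneg hX _)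
  -- main induction
  have MAIN : ∀ (d j k : ℕ) (hd : k = j + 1 + d) (hkn : k ≤ n), 1 ≤ j → ∀ f : E → ℝ,
      Measurable f → (∃ C, ∀ x, |f x| ≤ C) → ∀ i : I j,
      locNorm (muLoc (μ j) (F j i)) (2*preal) (qhat j k f)
        ≤ (succSet p j k i).sup' (hsne j k (by omega) hkn i) (Mprod μ F p j k) * δ2 *
          ((succSet p j k i).sup' (hsne j k (by omega) hkn i)
            fun l => locNorm (muLoc (μ k) (F k l)) (2*preal) f) := by
    intro d
    induction d with
    | zero =>
      intro j k hk hkn hj1 f hf hfb i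
      have hkj : k = j + 1 := by omega
      subst hkj
      have hjn : j < n := by omega
      have hX0 : 0 ≤ (succSet p j (j+1) i).sup' (hsne j (j+1) (by omega) hkn i)
          fun l => locNorm (muLoc (μ (j+1)) (F (j+1) l)) (2*preal) f := by
        obtain ⟨l, hl⟩ := hsne j (j+1) (Nat.lt_succ_self j) hkn i
        exact (aux_locNorm_nonneg (muLoc (μ (j+1)) (F (j+1) l)) (2*preal) f).trans
          (Finset.le_sup' (fun l => locNorm (muLoc (μ (j+1)) (F (j+1) l)) (2*preal) f) hl)
      refine ASM j (j+1) (by omega) hkn hj1 f hf hfb i _ hX0 (fun _ => 1)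
        (fun _ => zero_le_one) ?_ ?_ ?_
      · intro l₁ hl₁
        rw [hqdiag, one_mul]
        exact (Finset.le_sup' (fun l => locNorm (muLoc (μ (j+1)) (F (j+1) l)) (2*preal) f)
          hl₁).trans (le_mul_of_one_le_left hX0 hδ2_1)
      · intro l₁ hl₁
        rw [hqdiag, one_mul]
        haveI : IsProbabilityMeasure (muLoc (μ (j+1)) (F (j+1) l₁)) :=
          aux_isProb_muLoc (hF0 (j+1) (j+1) hkn hkn l₁) (hFt (j+1) hkn _)
        obtain ⟨C, hC⟩ := hfb
        have hmono : locNorm (muLoc (μ (j+1)) (F (j+1) l₁)) preal f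
            ≤ locNorm (muLoc (μ (j+1)) (F (j+1) l₁)) (2*preal) f :=
          aux_locNorm_mono hf hC hpreal0 (by linarith)
        exact (hmono.trans (Finset.le_sup'
          (fun l => locNorm (muLoc (μ (j+1)) (F (j+1) l)) (2*preal) f) hl₁)).trans
          (le_mul_of_one_le_left hX0 hδp)
      · intro l₁ hl₁
        rw [mul_one]
        exact le_of_eq (M_base j hkn i).symm
    | succ d ih =>
      intro j k hk hkn hj1 f hf hfb i
      have hjk1 : j + 1 < k := by omega
      have hjk : j < k := by omega
      have hX0 : 0 ≤ (succSet p j k i).sup' (hsne j k (by omega) hkn i)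
          fun l => locNorm (muLoc (μ k) (F k l)) (2*preal) f := by
        obtain ⟨l, hl⟩ := hsne j k hjk hkn i
        exact (aux_locNorm_nonneg (muLoc (μ k) (F k l)) (2*preal) f).trans
          (Finset.le_sup' (fun l => locNorm (muLoc (μ k) (F k l)) (2*preal) f) hl)
      refine ASM j k hjk hkn hj1 f hf hfb i _ hX0
        (fun l₁ => (succSet p (j+1) k l₁).sup' (hsne (j+1) k hjk1 hkn l₁) (Mprod μ F p (j+1) k))
        (fun l₁ => MM_nonneg (j+1) k hjk1 hkn l₁) ?_ ?_ ?_
      · intro l₁ hl₁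
        have hIH := ih (j+1) k (by omega) hkn (by omega) f hf hfb l₁
        refine hIH.trans ?_
        have hsub := succ_subset j k hjk1 hkn i l₁ hl₁
        have hXle : ((succSet p (j+1) k l₁).sup' (hsne (j+1) k hjk1 hkn l₁)
              fun l => locNorm (muLoc (μ k) (F k l)) (2*preal) f)
            ≤ (succSet p j k i).sup' (hsne j k hjk hkn i)
              fun l => locNorm (muLoc (μ k) (F k l)) (2*preal) f :=
          Finset.sup'_le _ _ fun l hl => Finset.le_sup'
            (fun l => locNorm (muLoc (μ k) (F k l)) (2*preal) f) (hsub hl)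
        exact mul_le_mul_of_nonneg_left hXle
          (mul_nonneg (MM_nonneg (j+1) k hjk1 hkn l₁) hδ2_0.le)
      · intro l₁ hl₁
        have hind' := hind (j+1) k hjk1 hkn (by omega) l₁ f hf hfb
        refine hind'.trans ?_
        have hsub := succ_subset j k hjk1 hkn i l₁ hl₁
        obtain ⟨C, hC⟩ := hfb
        have hXle : ((succSet p (j+1) k l₁).sup' (hsne (j+1) k hjk1 hkn l₁)
              fun l => locNorm (muLoc (μ k) (F k l)) preal f)
            ≤ (succSet p j k i).sup' (hsne j k hjk hkn i)
              fun l => locNorm (muLoc (μ k) (F k l)) (2*preal) f := by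
          refine Finset.sup'_le _ _ fun l hl => ?_
          haveI : IsProbabilityMeasure (muLoc (μ k) (F k l)) :=
            aux_isProb_muLoc (hF0 k k hkn hkn l) (hFt k hkn _)
          exact (aux_locNorm_mono hf hC hpreal0 (by linarith)).trans
            (Finset.le_sup' (fun l => locNorm (muLoc (μ k) (F k l)) (2*preal) f) (hsub hl))
        exact mul_le_mul_of_nonneg_left hXle
          (mul_nonneg (MM_nonneg (j+1) k hjk1 hkn l₁) hδp0.le)
      · intro l₁ hl₁
        exact key_M j k hjk1 hkn i l₁ hl₁
  -- conclusion
  intro j k hjk hkn hj1 f hf hfb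
  have part1 := fun i : I j => MAIN (k - (j+1)) j k (by omega) hkn hj1 f hf hfb i
  refine ⟨fun i => part1 i, ?_⟩
  have hmax0 : 0 ≤ maxNorm μ F k (2*preal) f := by
    obtain ⟨l⟩ := (inferInstance : Nonempty (I k))
    exact (aux_locNorm_nonneg (muLoc (μ k) (F k l)) (2*preal) f).trans
      (Finset.le_sup' (fun l => locNorm (muLoc (μ k) (F k l)) (2*preal) f) (Finset.mem_univ l))
  simp only [maxNorm]
  refine Finset.sup'_le _ _ fun i _ => ?_
  refine (part1 i).trans ?_
  have hXle : ((succSet p j k i).sup' (hsne j k hjk hkn i)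
        fun l => locNorm (muLoc (μ k) (F k l)) (2*preal) f)
      ≤ Finset.univ.sup' Finset.univ_nonempty
        fun l : I k => locNorm (muLoc (μ k) (F k l)) (2*preal) f :=
    Finset.sup'_le _ _ fun l _ => Finset.le_sup'
      (fun l => locNorm (muLoc (μ k) (F k l)) (2*preal) f) (Finset.mem_univ l)
  have hMle : (succSet p j k i).sup' (hsne j k hjk hkn i) (Mprod μ F p j k)
      ≤ Finset.univ.sup' Finset.univ_nonempty
        (fun i : I j => (succSet p j k i).sup' (hsne j k hjk hkn i) (Mprod μ F p j k)) :=
    Finset.le_sup' (fun i : I j => (succSet p j k i).sup' (hsne j k hjk hkn i)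
      (Mprod μ F p j k)) (Finset.mem_univ i)
  calc (succSet p j k i).sup' (hsne j k hjk hkn i) (Mprod μ F p j k) * δ2 *
        ((succSet p j k i).sup' (hsne j k hjk hkn i)
          fun l => locNorm (muLoc (μ k) (F k l)) (2*preal) f)
      ≤ (succSet p j k i).sup' (hsne j k hjk hkn i) (Mprod μ F p j k) * δ2 *
        (Finset.univ.sup' Finset.univ_nonempty
          fun l : I k => locNorm (muLoc (μ k) (F k l)) (2*preal) f) :=
        mul_le_mul_of_nonneg_left hXle (mul_nonneg (MM_nonneg j k hjk hkn i) hδ2_0.le)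
    _ ≤ (Finset.univ.sup' Finset.univ_nonempty
          (fun i : I j => (succSet p j k i).sup' (hsne j k hjk hkn i) (Mprod μ F p j k)))
          * δ2 *
        (Finset.univ.sup' Finset.univ_nonempty
          fun l : I k => locNorm (muLoc (μ k) (F k l)) (2*preal) f) := by
        refine mul_le_mul_of_nonneg_right
          (mul_le_mul_of_nonneg_right hMle hδ2_0.le) ?_
        exact (aux_locNorm_nonneg _ _ _).trans (Finset.le_sup'
          (fun l => locNorm (muLoc (μ k) (F k l)) (2*preal) f)
          (Finset.mem_univ (Classical.arbitrary (I k))))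
end

section
/- In the partition setting under Assumptions (D) and (B), fix p ≥ 1, q ≥ 1 and indices 1 ≤ j with j+1 < k ≤ n, and suppose δ ≥ 0 is such that ‖q̂_{j+1,k}(f)‖_{j+1,l,p} ≤ δ·M_{j+1,k}(l)·max_{r∈s_k(l)} ‖f‖_{k,r,q} for all l ∈ I_{j+1} and all bounded measurable f. Then for all i ∈ I_j and all bounded measurable f: ‖q_{j,k}(f)‖_{j,i,p} ≤ γ^{(p−1)/p}·δ·M_{j,k}(i)·max_{r∈s_k(i)} ‖f‖_{k,r,q}, and consequently ‖q_{j,k}(f)‖_{j,p} ≤ γ^{(p−1)/p}·δ·A_{j,k}·‖f‖_{k,q}. -/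
open MeasureTheory

variable {E : Type} [MeasurableSpace E]
variable {I : ℕ → Type} [∀ k, Fintype (I k)] [∀ k, Nonempty (I k)] [∀ k, DecidableEq (I k)]

open scoped ENNReal

section Helpers

lemma bdd_integrable {μ : Measure E} [IsFiniteMeasure μ] {f : E → ℝ} {C : ℝ}
    (hf : Measurable f) (h : ∀ x, |f x| ≤ C) : Integrable f μ :=
  (integrable_const C).mono' hf.aestronglyMeasurable
    (Filter.Eventually.of_forall (by simpa [Real.norm_eq_abs] using h))

lemma rpow_meas {f : E → ℝ} (hf : Measurable f) {q : ℝ} (hq : 0 ≤ q) :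
    Measurable fun x => |f x| ^ q :=
  (Real.continuous_rpow_const hq).measurable.comp hf.abs

omit [MeasurableSpace E] in
lemma rpow_bdd {f : E → ℝ} {C q : ℝ} (hC : ∀ x, |f x| ≤ C) (hq : 0 ≤ q) :
    ∀ x, |(|f x| ^ q)| ≤ C ^ q := fun x => by
  rw [abs_of_nonneg (Real.rpow_nonneg (abs_nonneg _) q)]
  exact Real.rpow_le_rpow (abs_nonneg _) (hC x) hq

lemma jensen_abs_rpow {ν : Measure E} [IsProbabilityMeasure ν] {f : E → ℝ} {C q : ℝ}
    (hf : Measurable f) (hC : ∀ x, |f x| ≤ C) (hq : 1 ≤ q) :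
    (∫ x, |f x| ∂ν) ^ q ≤ ∫ x, |f x| ^ q ∂ν := by
  have hq0 : (0:ℝ) ≤ q := by linarith
  have h1 : Integrable (fun x => |f x|) ν :=
    bdd_integrable hf.abs (by simpa using hC)
  have h2 : Integrable (fun x => |f x| ^ q) ν :=
    bdd_integrable (rpow_meas hf hq0) (rpow_bdd hC hq0)
  exact (convexOn_rpow hq).map_integral_le
    (Real.continuous_rpow_const hq0).continuousOn isClosed_Ici
    (Filter.Eventually.of_forall fun x => abs_nonneg (f x)) h1 h2

lemma kernel_int_meas {K : E → Measure E} (hK : Measurable K)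
    (hKp : ∀ x, IsProbabilityMeasure (K x)) {u : E → ℝ} (hu : Measurable u) :
    Measurable fun x => ∫ y, u y ∂(K x) := by
  let κ : ProbabilityTheory.Kernel E E := ⟨K, hK⟩
  haveI : ProbabilityTheory.IsMarkovKernel κ := ⟨hKp⟩
  have : StronglyMeasurable fun x => ∫ y, u y ∂(κ x) :=
    MeasureTheory.StronglyMeasurable.integral_kernel_prod_right
      (f := fun _ y => u y) ((hu.comp measurable_snd).stronglyMeasurable)
  exact this.measurable

lemma kernel_lint_meas {K : E → Measure E} (hK : Measurable K)
    (hKp : ∀ x, IsProbabilityMeasure (K x)) {u : E → ℝ≥0∞} (hu : Measurable u) :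
    Measurable fun x => ∫⁻ y, u y ∂(K x) := by
  let κ : ProbabilityTheory.Kernel E E := ⟨K, hK⟩
  haveI : ProbabilityTheory.IsMarkovKernel κ := ⟨hKp⟩
  have : Measurable fun x => ∫⁻ y, u y ∂(κ x) :=
    Measurable.lintegral_kernel_prod_right (f := fun _ y => u y) (hu.comp measurable_snd)
  exact this

lemma integral_bind_inv {μ : Measure E} {K : E → Measure E} (hK : Measurable K)
    (hKp : ∀ x, IsProbabilityMeasure (K x)) (hinv : μ.bind K = μ)
    {u : E → ℝ} {C : ℝ} (hu : Measurable u) (hu0 : ∀ x, 0 ≤ u x) (hub : ∀ x, u x ≤ C) :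
    ∫ x, (∫ y, u y ∂(K x)) ∂μ = ∫ x, u x ∂μ := by
  set U : E → ℝ≥0∞ := fun x => ENNReal.ofReal (u x) with hU
  have hUm : Measurable U := ENNReal.measurable_ofReal.comp hu
  have hUb : ∀ x, U x ≤ ENNReal.ofReal C := fun x => ENNReal.ofReal_le_ofReal (hub x)
  have hpoint : ∀ x, ∫ y, u y ∂(K x) = (∫⁻ y, U y ∂(K x)).toReal := fun x =>
    integral_eq_lintegral_of_nonneg_ae (Filter.Eventually.of_forall hu0)
      hu.aestronglyMeasurable
  have hVm : Measurable fun x => ∫⁻ y, U y ∂(K x) := kernel_lint_meas hK hKp hUm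
  have hVfin : ∀ x, (∫⁻ y, U y ∂(K x)) ≤ ENNReal.ofReal C := fun x => by
    haveI := hKp x
    calc (∫⁻ y, U y ∂(K x)) ≤ ∫⁻ _, ENNReal.ofReal C ∂(K x) := lintegral_mono hUb
    _ = ENNReal.ofReal C := by simp
  calc ∫ x, (∫ y, u y ∂(K x)) ∂μ = ∫ x, (∫⁻ y, U y ∂(K x)).toReal ∂μ := by
        simp_rw [hpoint]
    _ = (∫⁻ x, (∫⁻ y, U y ∂(K x)) ∂μ).toReal := by
        refine integral_toReal hVm.aemeasurable ?_
        exact Filter.Eventually.of_forall fun x =>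
          lt_of_le_of_lt (hVfin x) ENNReal.ofReal_lt_top
    _ = (∫⁻ x, U x ∂(μ.bind K)).toReal := by rw [Measure.lintegral_bind hK.aemeasurable hUm.aemeasurable]
    _ = (∫⁻ x, U x ∂μ).toReal := by rw [hinv]
    _ = ∫ x, u x ∂μ := by
        rw [integral_eq_lintegral_of_nonneg_ae (Filter.Eventually.of_forall hu0)
          hu.aestronglyMeasurable]

lemma locNorm_nonneg (ν : Measure E) (p : ℝ) (f : E → ℝ) : 0 ≤ locNorm ν p f :=
  Real.rpow_nonneg
    (integral_nonneg fun x => Real.rpow_nonneg (abs_nonneg _) _) _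

lemma locNorm_le_of_integral_le {ν : Measure E} {p : ℝ} (hp : 1 ≤ p) {f : E → ℝ} {X : ℝ}
    (hX : 0 ≤ X) (h : ∫ x, |f x| ^ p ∂ν ≤ X ^ p) : locNorm ν p f ≤ X := by
  have hp0 : p ≠ 0 := by linarith
  have h0 : 0 ≤ ∫ x, |f x| ^ p ∂ν := integral_nonneg fun x => Real.rpow_nonneg (abs_nonneg _) _
  calc locNorm ν p f = (∫ x, |f x| ^ p ∂ν) ^ (1/p) := rfl
    _ ≤ (X ^ p) ^ (1/p) := Real.rpow_le_rpow h0 h (by positivity)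
    _ = X := by rw [← Real.rpow_mul hX, mul_one_div, div_self hp0, Real.rpow_one]

lemma integral_le_of_locNorm_le {ν : Measure E} {p : ℝ} (hp : 1 ≤ p) {f : E → ℝ} {X : ℝ}
    (hX : 0 ≤ X) (h : locNorm ν p f ≤ X) : ∫ x, |f x| ^ p ∂ν ≤ X ^ p := by
  have hp0 : p ≠ 0 := by linarith
  have h0 : 0 ≤ ∫ x, |f x| ^ p ∂ν := integral_nonneg fun x => Real.rpow_nonneg (abs_nonneg _) _
  have := Real.rpow_le_rpow (Real.rpow_nonneg h0 _) h (by linarith : (0:ℝ) ≤ p)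
  rwa [← Real.rpow_mul h0, one_div_mul_cancel hp0, Real.rpow_one] at this

lemma muLoc_integral (ν : Measure E) (S : Set E) (w : E → ℝ) :
    ∫ x, w x ∂(muLoc ν S) = (ν S).toReal⁻¹ * ∫ x in S, w x ∂ν := by
  rw [muLoc, integral_smul_measure, ENNReal.toReal_inv, smul_eq_mul]

lemma muLoc_prob {ν : Measure E} {S : Set E} (h0 : ν S ≠ 0) (hfin : ν S ≠ ⊤) :
    IsProbabilityMeasure (muLoc ν S) := by
  constructor
  rw [muLoc, Measure.smul_apply, Measure.restrict_apply_univ, smul_eq_mul,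
    ENNReal.inv_mul_cancel h0 hfin]

lemma sup'_nonneg_of {α : Type} {s : Finset α} (hs : s.Nonempty) {f : α → ℝ}
    (h : ∀ a ∈ s, 0 ≤ f a) : 0 ≤ s.sup' hs f := by
  obtain ⟨a, ha⟩ := hs
  exact le_trans (h a ha) (Finset.le_sup' f ha)

end Helpers

/- Lemma 4.15 of the paper: an L_p-L_q-bound for q̂_{j+1,k} implies a
   corresponding bound for q_{j,k}, at the cost of an extra factor
   γ^{(p-1)/p}. -/
theorem stmt_18
    (n : ℕ) (μ : ℕ → Measure E)
    (hμprob : ∀ k, k ≤ n → IsProbabilityMeasure (μ k))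
    (hμac : ∀ j k, j ≤ n → k ≤ n → μ j ≪ μ k)
    (g : ℕ → E → ℝ)
    (hgmeas : ∀ k, Measurable (g k))
    (hgpos : ∀ k x, 0 < g k x)
    (hgbdd : ∀ k, ∃ C : ℝ, ∀ x, g k x ≤ C)
    (hgdens : ∀ k, k < n → ∀ f : E → ℝ, Measurable f → (∃ C : ℝ, ∀ x, |f x| ≤ C) →
      (∫ x, f x ∂(μ (k+1))) = (∫ x, f x * g k x ∂(μ k)) / (∫ x, g k x ∂(μ k)))
    (K : ℕ → E → Measure E)
    (hKprob : ∀ k x, IsProbabilityMeasure (K k x))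
    (hKmeas : ∀ k (A : Set E), MeasurableSet A → Measurable fun x => K k x A)
    (hKinv : ∀ k, k ≤ n → (μ k).bind (K k) = μ k)
    (F : ∀ k, I k → Set E)
    (hFmeas : ∀ k j, MeasurableSet (F k j))
    (hFpos : ∀ k, k ≤ n → ∀ j, 0 < μ 0 (F k j))
    (hFdisj : ∀ k, k ≤ n → ∀ j j' : I k, j ≠ j' → Disjoint (F k j) (F k j'))
    (hFcover : ∀ k, k ≤ n → (⋃ j : I k, F k j) = Set.univ)
    (p : ∀ j k : ℕ, I k → I j)
    (hp : ∀ j k, j < k → k ≤ n → ∀ l : I k, F k l ⊆ F j (p j k l))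
    (hsne : ∀ (j k : ℕ) (_ : j < k) (_ : k ≤ n) (i : I j), (succSet p j k i).Nonempty)
    (hD : ∀ k, 1 ≤ k → k ≤ n → ∀ (j : I k) (x : E), x ∉ F k j → K k x (F k j) = 0)
    (qhat : ℕ → ℕ → (E → ℝ) → E → ℝ)
    (hqdiag : ∀ k f, qhat k k f = f)
    (hqstep : ∀ j k, j < k → k ≤ n → ∀ (f : E → ℝ) (x : E),
      qhat j k f x = ∫ y, (g j y / (∫ z, g j z ∂(μ j))) * qhat (j+1) k f y ∂(K j x))
    (γ : ℝ) (hγ : 1 ≤ γ)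
    (hB : ∀ k, k < n → ∀ (j : I k) (x : E), x ∈ F k j →
      ((μ k (F k j)).toReal / (μ (k+1) (F k j)).toReal)
        * (g k x / (∫ z, g k z ∂(μ k))) ≤ γ)
    (preal qreal : ℝ) (hpreal : 1 ≤ preal) (hqreal : 1 ≤ qreal)
    (j k : ℕ) (hj : 1 ≤ j) (hjk : j + 1 < k) (hkn : k ≤ n)
    (δ : ℝ) (hδ : 0 ≤ δ)
    (hhyp : ∀ (l : I (j+1)) (f : E → ℝ), Measurable f → (∃ C : ℝ, ∀ x, |f x| ≤ C) →
      locNorm (muLoc (μ (j+1)) (F (j+1) l)) preal (qhat (j+1) k f)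
        ≤ δ * ((succSet p (j+1) k l).sup' (hsne (j+1) k hjk hkn l) (Mprod μ F p (j+1) k))
          * ((succSet p (j+1) k l).sup' (hsne (j+1) k hjk hkn l) fun s =>
              locNorm (muLoc (μ k) (F k s)) qreal f)) :
    ∀ (i : I j) (f : E → ℝ), Measurable f → (∃ C : ℝ, ∀ x, |f x| ≤ C) →
      (locNorm (muLoc (μ j) (F j i)) preal (qFull μ g K qhat j k f)
        ≤ γ ^ ((preal - 1)/preal) * δ
          * ((succSet p j k i).sup' (hsne j k (Nat.lt_of_succ_lt hjk) hkn i) (Mprod μ F p j k))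
          * ((succSet p j k i).sup' (hsne j k (Nat.lt_of_succ_lt hjk) hkn i) fun s =>
              locNorm (muLoc (μ k) (F k s)) qreal f))
      ∧ maxNorm μ F j preal (qFull μ g K qhat j k f)
          ≤ γ ^ ((preal - 1)/preal) * δ
            * (Finset.univ.sup' Finset.univ_nonempty fun i' : I j =>
                (succSet p j k i').sup' (hsne j k (Nat.lt_of_succ_lt hjk) hkn i') (Mprod μ F p j k))
            * maxNorm μ F k qreal f := by
  have hjk' : j < k := by omega
  have hjn : j < n := by omega
  have hjn' : j ≤ n := by omega
  have hj1n : j + 1 ≤ n := by omega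
  haveI hPj : IsProbabilityMeasure (μ j) := hμprob j hjn'
  haveI hPj1 : IsProbabilityMeasure (μ (j+1)) := hμprob (j+1) hj1n
  haveI hPk : IsProbabilityMeasure (μ k) := hμprob k hkn
  have hE : Nonempty E := by
    by_contra hne
    rw [not_nonempty_iff] at hne
    have h1 : μ j Set.univ = 1 := measure_univ
    rw [Set.univ_eq_empty_iff.mpr hne] at h1
    simp at h1
  have hKm' : ∀ m, Measurable (K m) := fun m =>
    Measure.measurable_of_measurable_coe _ (fun s hs => hKmeas m s hs)
  have hposF : ∀ m, m ≤ n → ∀ (k' : ℕ), k' ≤ n → ∀ (j' : I k'), μ m (F k' j') ≠ 0 := by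
    intro m hm k' hk' j' h0
    exact (hFpos k' hk' j').ne' ((hμac 0 m (Nat.zero_le n) hm) h0)
  have hp0 : (0:ℝ) ≤ preal := by linarith
  have hq0 : (0:ℝ) ≤ qreal := by linarith
  have hpne : preal ≠ 0 := by linarith
  have hgint : ∀ m, m ≤ n → 0 < ∫ z, g m z ∂(μ m) := by
    intro m hm
    haveI := hμprob m hm
    obtain ⟨Cg, hCg⟩ := hgbdd m
    have hint : Integrable (g m) (μ m) :=
      bdd_integrable (hgmeas m) (fun x => by
        rw [abs_of_pos (hgpos m x)]; exact hCg x)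
    rw [integral_pos_iff_support_of_nonneg
      (Pi.le_def.mpr fun x => (hgpos m x).le) hint]
    have hs : Function.support (g m) = Set.univ :=
      Set.eq_univ_of_forall fun x => (hgpos m x).ne'
    rw [hs]
    simp
  have hqmb : ∀ (d j' : ℕ), j' + d = k → ∀ (u : E → ℝ), Measurable u →
      ∀ (Cu : ℝ), 0 ≤ Cu → (∀ x, |u x| ≤ Cu) →
      Measurable (qhat j' k u) ∧ ∃ Cq, 0 ≤ Cq ∧ ∀ x, |qhat j' k u x| ≤ Cq := by
    intro d
    induction d with
    | zero =>
      intro j' hj' u hu Cu hCu hub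
      have hjeq : j' = k := by omega
      subst hjeq
      rw [hqdiag]
      exact ⟨hu, Cu, hCu, hub⟩
    | succ d ih =>
      intro j' hj' u hu Cu hCu hub
      have hj'k : j' < k := by omega
      have hj'n : j' ≤ n := by omega
      obtain ⟨ihm, Cq, hCq, hqb⟩ := ih (j'+1) (by omega) u hu Cu hCu hub
      obtain ⟨Cg', hCg'⟩ := hgbdd j'
      have hCg'0 : 0 < Cg' := lt_of_lt_of_le (hgpos j' (Classical.arbitrary E)) (hCg' _)
      have hc := hgint j' hj'n
      set c := ∫ z, g j' z ∂(μ j') with hcdef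
      set v : E → ℝ := fun y => (g j' y / c) * qhat (j'+1) k u y with hv
      have hvm : Measurable v := ((hgmeas j').div_const c).mul ihm
      have hvb : ∀ y, |v y| ≤ (Cg' / c) * Cq := by
        intro y
        rw [hv]
        simp only
        rw [abs_mul]
        refine mul_le_mul ?_ (hqb y) (abs_nonneg _) (by positivity)
        rw [abs_of_pos (div_pos (hgpos j' y) hc)]
        gcongr
        exact hCg' y
      have heq : qhat j' k u = fun x => ∫ y, v y ∂(K j' x) := by
        funext x
        rw [hqstep j' k hj'k hkn u x]
      constructor
      · rw [heq]
        exact kernel_int_meas (hKm' j') (hKprob j') hvm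
      · refine ⟨(Cg' / c) * Cq, by positivity, ?_⟩
        intro x
        rw [heq]
        haveI := hKprob j' x
        have hn := norm_integral_le_of_norm_le_const (μ := K j' x) (f := v)
          (C := (Cg' / c) * Cq)
          (Filter.Eventually.of_forall fun y => by
            rw [Real.norm_eq_abs]; exact hvb y)
        rw [Real.norm_eq_abs] at hn
        simpa using hn
  intro i f hf hfb
  obtain ⟨C0, hC0⟩ := hfb
  set C := max C0 0 with hCdef
  have hC : ∀ x, |f x| ≤ C := fun x => le_trans (hC0 x) (le_max_left _ _)
  have hCnn : (0:ℝ) ≤ C := le_max_right _ _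
  set Kf : E → ℝ := fun y => ∫ z, f z ∂(K k y) with hKfdef
  have hKfm : Measurable Kf := kernel_int_meas (hKm' k) (hKprob k) hf
  have hKfb : ∀ y, |Kf y| ≤ C := by
    intro y
    haveI := hKprob k y
    have hn := norm_integral_le_of_norm_le_const (μ := K k y) (f := f) (C := C)
      (Filter.Eventually.of_forall fun x => by rw [Real.norm_eq_abs]; exact hC x)
    rw [Real.norm_eq_abs] at hn
    simpa using hn
  obtain ⟨hhm, Ch, hCh, hhb⟩ := hqmb (k - (j+1)) (j+1) (by omega) Kf hKfm C hCnn hKfb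
  set h : E → ℝ := qhat (j+1) k Kf with hhdef
  have hKone : ∀ (r : I k) (x : E), x ∈ F k r → K k x ((F k r)ᶜ) = 0 := by
    intro r x hx
    haveI := hKprob k x
    have hsum : ∑ r', (K k x) (F k r') = 1 := by
      have hu : (K k x) Set.univ = 1 := measure_univ
      rw [← hFcover k hkn] at hu
      rw [measure_iUnion (fun r1 r2 hne => hFdisj k hkn r1 r2 hne)
        (fun r' => hFmeas k r'), tsum_fintype] at hu
      exact hu
    have hFr : K k x (F k r) = 1 := by
      rw [Finset.sum_eq_single r
        (fun r' _ hne => hD k (by omega) hkn r' x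
          (fun hx' => (Set.disjoint_left.mp (hFdisj k hkn r' r hne)) hx' hx))
        (fun hr => absurd (Finset.mem_univ r) hr)] at hsum
      exact hsum
    rw [measure_compl (hFmeas k r) (measure_ne_top _ _), measure_univ, hFr,
      tsub_self]
  have hJen : ∀ r : I k, locNorm (muLoc (μ k) (F k r)) qreal Kf
      ≤ locNorm (muLoc (μ k) (F k r)) qreal f := by
    intro r
    haveI hprob : IsProbabilityMeasure (muLoc (μ k) (F k r)) :=
      muLoc_prob (hposF k hkn k hkn r) (measure_ne_top _ _)
    have hcore : ∫ x, |Kf x| ^ qreal ∂(muLoc (μ k) (F k r))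
        ≤ ∫ x, |f x| ^ qreal ∂(muLoc (μ k) (F k r)) := by
      set u0 : E → ℝ := fun x => |f x| ^ qreal with hu0def
      have hu0m : Measurable u0 := rpow_meas hf hq0
      have hu0b : ∀ x, |u0 x| ≤ C ^ qreal := rpow_bdd hC hq0
      have hu00 : ∀ x, 0 ≤ u0 x := fun x => Real.rpow_nonneg (abs_nonneg _) _
      have hpw : ∀ x, |Kf x| ^ qreal ≤ ∫ y, u0 y ∂(K k x) := by
        intro x
        haveI := hKprob k x
        have h1 : |Kf x| ≤ ∫ y, |f y| ∂(K k x) := by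
          rw [hKfdef]
          simp only
          rw [← Real.norm_eq_abs (∫ z, f z ∂(K k x))]
          exact (norm_integral_le_integral_norm f).trans
            (le_of_eq (by simp [Real.norm_eq_abs]))
        calc |Kf x| ^ qreal ≤ (∫ y, |f y| ∂(K k x)) ^ qreal :=
              Real.rpow_le_rpow (abs_nonneg _) h1 hq0
          _ ≤ ∫ y, u0 y ∂(K k x) := jensen_abs_rpow hf hC hqreal
      have hWm : Measurable fun x => ∫ y, u0 y ∂(K k x) :=
        kernel_int_meas (hKm' k) (hKprob k) hu0m
      have hWb : ∀ x, |∫ y, u0 y ∂(K k x)| ≤ C ^ qreal := by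
        intro x
        haveI := hKprob k x
        have hn := norm_integral_le_of_norm_le_const (μ := K k x) (f := u0)
          (C := C ^ qreal)
          (Filter.Eventually.of_forall fun y => by
            rw [Real.norm_eq_abs]; exact hu0b y)
        rw [Real.norm_eq_abs] at hn
        simpa using hn
      have hInv : ∫ x, (∫ y, u0 y ∂(K k x)) ∂(muLoc (μ k) (F k r))
          = ∫ x, u0 x ∂(muLoc (μ k) (F k r)) := by
        rw [muLoc_integral, muLoc_integral]
        congr 1
        set w : E → ℝ := (F k r).indicator u0 with hwdef
        have hwm : Measurable w := hu0m.indicator (hFmeas k r)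
        have hw0 : ∀ x, 0 ≤ w x := fun x => Set.indicator_nonneg (fun y _ => hu00 y) x
        have hwb : ∀ x, w x ≤ C ^ qreal := by
          intro x
          by_cases hx : x ∈ F k r
          · rw [hwdef, Set.indicator_of_mem hx]
            exact le_trans (le_abs_self _) (hu0b x)
          · rw [hwdef, Set.indicator_of_notMem hx]
            positivity
        have hwabs : ∀ x, |w x| ≤ C ^ qreal := fun x => by
          rw [abs_of_nonneg (hw0 x)]; exact hwb x
        have hi : ∀ x ∈ F k r, (∫ y, u0 y ∂(K k x)) = ∫ y, w y ∂(K k x) := by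
          intro x hx
          refine integral_congr_ae ?_
          have hnull : (K k x) {y | u0 y ≠ w y} = 0 := by
            refine measure_mono_null ?_ (hKone r x hx)
            intro y hy
            by_contra hyT
            simp only [Set.mem_compl_iff, not_not] at hyT
            exact hy (by rw [hwdef, Set.indicator_of_mem hyT])
          rw [Filter.EventuallyEq, ae_iff]
          convert hnull using 2
        have hii : ∀ x, x ∉ F k r → (∫ y, w y ∂(K k x)) = 0 := by
          intro x hx
          have hKT : K k x (F k r) = 0 := hD k (by omega) hkn r x hx
          have hae : ∀ᵐ y ∂(K k x), w y = 0 := by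
            rw [ae_iff]
            refine measure_mono_null ?_ hKT
            intro y hy
            simp only [Set.mem_setOf_eq] at hy
            by_contra hyT
            exact hy (by rw [hwdef, Set.indicator_of_notMem hyT])
          rw [integral_congr_ae hae, integral_zero]
        have hWintm : Measurable fun x => ∫ y, w y ∂(K k x) :=
          kernel_int_meas (hKm' k) (hKprob k) hwm
        have hWintb : ∀ x, |∫ y, w y ∂(K k x)| ≤ C ^ qreal := by
          intro x
          haveI := hKprob k x
          have hn := norm_integral_le_of_norm_le_const (μ := K k x) (f := w)
            (C := C ^ qreal)
            (Filter.Eventually.of_forall fun y => by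
              rw [Real.norm_eq_abs]; exact hwabs y)
          rw [Real.norm_eq_abs] at hn
          simpa using hn
        calc ∫ x in F k r, (∫ y, u0 y ∂(K k x)) ∂(μ k)
            = ∫ x in F k r, (∫ y, w y ∂(K k x)) ∂(μ k) :=
              setIntegral_congr_fun (hFmeas k r) (fun x hx => hi x hx)
          _ = (∫ x in F k r, (∫ y, w y ∂(K k x)) ∂(μ k)) +
              (∫ x in (F k r)ᶜ, (∫ y, w y ∂(K k x)) ∂(μ k)) := by
              rw [setIntegral_congr_fun (hFmeas k r).compl
                (fun x hx => hii x hx), integral_zero, add_zero]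
          _ = ∫ x, (∫ y, w y ∂(K k x)) ∂(μ k) :=
              integral_add_compl (hFmeas k r) (bdd_integrable hWintm hWintb)
          _ = ∫ x, w x ∂(μ k) :=
              integral_bind_inv (hKm' k) (hKprob k) (hKinv k hkn) hwm hw0 hwb
          _ = ∫ x in F k r, u0 x ∂(μ k) := integral_indicator (hFmeas k r)
      calc ∫ x, |Kf x| ^ qreal ∂(muLoc (μ k) (F k r))
          ≤ ∫ x, (∫ y, u0 y ∂(K k x)) ∂(muLoc (μ k) (F k r)) := by
            refine integral_mono (bdd_integrable (rpow_meas hKfm hq0)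
              (rpow_bdd hKfb hq0)) (bdd_integrable hWm hWb) ?_
            exact fun x => hpw x
        _ = ∫ x, u0 x ∂(muLoc (μ k) (F k r)) := hInv
    exact Real.rpow_le_rpow
      (integral_nonneg fun x => Real.rpow_nonneg (abs_nonneg _) _) hcore
      (by positivity)
  have hcompat : ∀ r : I k, p j k r = p j (j+1) (p (j+1) k r) := by
    intro r
    have hne : (F k r).Nonempty :=
      nonempty_of_measure_ne_zero (hFpos k hkn r).ne'
    obtain ⟨x, hx⟩ := hne
    by_contra hcon
    exact (Set.disjoint_left.mp (hFdisj j hjn' _ _ hcon))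
      (hp j k hjk' hkn r hx)
      ((hp j (j+1) (by omega) hj1n (p (j+1) k r)) (hp (j+1) k hjk hkn r hx))
  have hmem : ∀ (i0 : I j) (l : I (j+1)), l ∈ succSet p j (j+1) i0 →
      ∀ r ∈ succSet p (j+1) k l, r ∈ succSet p j k i0 := by
    intro i0 l hl r hr
    rw [succSet, Finset.mem_filter] at hl hr ⊢
    exact ⟨Finset.mem_univ _, by rw [hcompat r, hr.2, hl.2]⟩
  have key : ∀ i0 : I j,
      locNorm (muLoc (μ j) (F j i0)) preal (qFull μ g K qhat j k f)
        ≤ γ ^ ((preal - 1)/preal) * δ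
          * ((succSet p j k i0).sup' (hsne j k (Nat.lt_of_succ_lt hjk) hkn i0)
              (Mprod μ F p j k))
          * ((succSet p j k i0).sup' (hsne j k (Nat.lt_of_succ_lt hjk) hkn i0)
              fun s => locNorm (muLoc (μ k) (F k s)) qreal f) := by
    intro i0
    have hane : μ j (F j i0) ≠ 0 := hposF j hjn' j hjn' i0
    have hbne : μ (j+1) (F j i0) ≠ 0 := hposF (j+1) hj1n j hjn' i0
    have ha : 0 < (μ j (F j i0)).toReal := ENNReal.toReal_pos hane (measure_ne_top _ _)
    have hb : 0 < (μ (j+1) (F j i0)).toReal := ENNReal.toReal_pos hbne (measure_ne_top _ _)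
    have hm0 : 0 < mRatio μ F j i0 := div_pos hb ha
    have hcj : 0 < ∫ z, g j z ∂(μ j) := hgint j hjn'
    obtain ⟨Cgj, hCgj⟩ := hgbdd j
    have hCgj0 : 0 < Cgj := lt_of_lt_of_le (hgpos j (Classical.arbitrary E)) (hCgj _)
    have hGpos : ∀ x, 0 < g j x / (∫ z, g j z ∂(μ j)) := fun x =>
      div_pos (hgpos j x) hcj
    have hGub : ∀ x, g j x / (∫ z, g j z ∂(μ j)) ≤ Cgj / (∫ z, g j z ∂(μ j)) := by
      intro x
      gcongr
      exact hCgj x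
    set M := (succSet p j k i0).sup' (hsne j k (Nat.lt_of_succ_lt hjk) hkn i0)
      (Mprod μ F p j k) with hMdef
    set N := (succSet p j k i0).sup' (hsne j k (Nat.lt_of_succ_lt hjk) hkn i0)
      (fun s => locNorm (muLoc (μ k) (F k s)) qreal f) with hNdef
    have hMnn : 0 ≤ M := by
      rw [hMdef]
      exact sup'_nonneg_of _ fun r _ => Finset.prod_nonneg fun t _ =>
        div_nonneg ENNReal.toReal_nonneg ENNReal.toReal_nonneg
    have hNnn : 0 ≤ N := by
      rw [hNdef]
      exact sup'_nonneg_of _ fun r _ => locNorm_nonneg _ _ _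
    have hNl : ∀ l ∈ succSet p j (j+1) i0,
        ((succSet p (j+1) k l).sup' (hsne (j+1) k hjk hkn l) fun s =>
          locNorm (muLoc (μ k) (F k s)) qreal Kf) ≤ N := by
      intro l hl
      apply Finset.sup'_le
      intro r hr
      refine le_trans (hJen r) ?_
      rw [hNdef]
      exact Finset.le_sup' (fun s => locNorm (muLoc (μ k) (F k s)) qreal f)
        (hmem i0 l hl r hr)
    have hMl : ∀ l ∈ succSet p j (j+1) i0,
        mRatio μ F j i0 * ((succSet p (j+1) k l).sup' (hsne (j+1) k hjk hkn l)
          (Mprod μ F p (j+1) k)) ≤ M := by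
      intro l hl
      obtain ⟨r, hrmem, hrEq⟩ := Finset.exists_mem_eq_sup' (hsne (j+1) k hjk hkn l)
        (Mprod μ F p (j+1) k)
      rw [hrEq]
      have hpr : p (j+1) k r = l := (Finset.mem_filter.mp hrmem).2
      have hplr : p j k r = i0 := by
        rw [hcompat r, hpr]
        exact (Finset.mem_filter.mp hl).2
      have hsplit : mRatio μ F j i0 * Mprod μ F p (j+1) k r = Mprod μ F p j k r := by
        rw [Mprod, Mprod, Finset.prod_eq_prod_Ico_succ_bot hjk'
          (fun t => mRatio μ F t (p t k r)), hplr]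
      rw [hsplit, hMdef]
      exact Finset.le_sup' (Mprod μ F p j k)
        (Finset.mem_filter.mpr ⟨Finset.mem_univ _, hplr⟩)
    have hGb : ∀ x ∈ F j i0, g j x / (∫ z, g j z ∂(μ j)) ≤ γ * mRatio μ F j i0 := by
      intro x hx
      have hB' := hB j hjn i0 x hx
      rw [div_mul_eq_mul_div, div_le_iff₀ hb] at hB'
      rw [mRatio, mul_div_assoc', le_div_iff₀ ha]
      linarith [hB']
    -- the function u = |h|^p
    set u : E → ℝ := fun x => |h x| ^ preal with hudef
    have hum : Measurable u := rpow_meas hhm hp0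
    have hub : ∀ x, |u x| ≤ Ch ^ preal := rpow_bdd hhb hp0
    have hu0 : ∀ x, 0 ≤ u x := fun x => Real.rpow_nonneg (abs_nonneg _) _
    -- the constant D
    set D := δ * (M / mRatio μ F j i0) * N with hDdef
    have hDnn : 0 ≤ D := by
      rw [hDdef]
      exact mul_nonneg (mul_nonneg hδ (div_nonneg hMnn hm0.le)) hNnn
    -- per-element bound at level j+1
    have hperl : ∀ l ∈ succSet p j (j+1) i0,
        ∫ x in F (j+1) l, u x ∂(μ (j+1))
          ≤ (μ (j+1) (F (j+1) l)).toReal * D ^ preal := by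
      intro l hl
      haveI hprob : IsProbabilityMeasure (muLoc (μ (j+1)) (F (j+1) l)) :=
        muLoc_prob (hposF (j+1) hj1n (j+1) hj1n l) (measure_ne_top _ _)
      have h0 := hhyp l Kf hKfm ⟨C, hKfb⟩
      have hM2nn : 0 ≤ (succSet p (j+1) k l).sup' (hsne (j+1) k hjk hkn l)
          (Mprod μ F p (j+1) k) :=
        sup'_nonneg_of _ fun r _ => Finset.prod_nonneg fun t _ =>
          div_nonneg ENNReal.toReal_nonneg ENNReal.toReal_nonneg
      have hN2nn : 0 ≤ (succSet p (j+1) k l).sup' (hsne (j+1) k hjk hkn l)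
          (fun s => locNorm (muLoc (μ k) (F k s)) qreal Kf) :=
        sup'_nonneg_of _ fun r _ => locNorm_nonneg _ _ _
      have hb1 : δ * ((succSet p (j+1) k l).sup' (hsne (j+1) k hjk hkn l)
            (Mprod μ F p (j+1) k))
          * ((succSet p (j+1) k l).sup' (hsne (j+1) k hjk hkn l)
            (fun s => locNorm (muLoc (μ k) (F k s)) qreal Kf)) ≤ D := by
        rw [hDdef]
        refine mul_le_mul ?_ (hNl l hl) hN2nn
          (mul_nonneg hδ (div_nonneg hMnn hm0.le))
        refine mul_le_mul le_rfl ?_ hM2nn hδ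
        rw [le_div_iff₀ hm0]
        have := hMl l hl
        linarith
      have h1 : locNorm (muLoc (μ (j+1)) (F (j+1) l)) preal h ≤ D := by
        refine le_trans ?_ hb1
        rw [hhdef]
        exact h0
      have h2 : ∫ x, |h x| ^ preal ∂(muLoc (μ (j+1)) (F (j+1) l)) ≤ D ^ preal :=
        integral_le_of_locNorm_le hpreal hDnn h1
      rw [muLoc_integral] at h2
      have hcl : 0 < (μ (j+1) (F (j+1) l)).toReal :=
        ENNReal.toReal_pos (hposF (j+1) hj1n (j+1) hj1n l) (measure_ne_top _ _)
      have heqint : ∫ x in F (j+1) l, u x ∂(μ (j+1))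
          = ∫ x in F (j+1) l, |h x| ^ preal ∂(μ (j+1)) := by
        rw [hudef]
      calc ∫ x in F (j+1) l, u x ∂(μ (j+1))
          = (μ (j+1) (F (j+1) l)).toReal * ((μ (j+1) (F (j+1) l)).toReal⁻¹
              * ∫ x in F (j+1) l, |h x| ^ preal ∂(μ (j+1))) := by
            rw [← mul_assoc, mul_inv_cancel₀ hcl.ne', one_mul, heqint]
        _ ≤ (μ (j+1) (F (j+1) l)).toReal * D ^ preal :=
            mul_le_mul_of_nonneg_left h2 hcl.le
    -- the partition split of F j i0 at level j+1
    have hSsplit : F j i0 = ⋃ l ∈ succSet p j (j+1) i0, F (j+1) l := by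
      apply Set.Subset.antisymm
      · intro x hx
        have hxU : x ∈ ⋃ l : I (j+1), F (j+1) l := by
          rw [hFcover (j+1) hj1n]
          trivial
        obtain ⟨l, hl⟩ := Set.mem_iUnion.mp hxU
        have hpl : p j (j+1) l = i0 := by
          by_contra hcon
          exact (Set.disjoint_left.mp (hFdisj j hjn' _ _ hcon))
            (hp j (j+1) (by omega) hj1n l hl) hx
        simp only [Set.mem_iUnion]
        exact ⟨l, Finset.mem_filter.mpr ⟨Finset.mem_univ _, hpl⟩, hl⟩
      · intro x hx
        simp only [Set.mem_iUnion] at hx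
        obtain ⟨l, hl, hxl⟩ := hx
        have hpl : p j (j+1) l = i0 := (Finset.mem_filter.mp hl).2
        have hsub := hp j (j+1) (by omega) hj1n l hxl
        rwa [hpl] at hsub
    have hpairs : (↑(succSet p j (j+1) i0) : Set (I (j+1))).Pairwise
        (Function.onFun Disjoint fun l => F (j+1) l) :=
      fun l1 _ l2 _ hne => hFdisj (j+1) hj1n l1 l2 hne
    have hSsplitInt : ∫ x in F j i0, u x ∂(μ (j+1))
        = ∑ l ∈ succSet p j (j+1) i0, ∫ x in F (j+1) l, u x ∂(μ (j+1)) := by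
      conv_lhs => rw [hSsplit]
      exact integral_biUnion_finset _ (fun l _ => hFmeas (j+1) l) hpairs
        (fun l _ => bdd_integrable hum hub)
    have hbsum : ∑ l ∈ succSet p j (j+1) i0, (μ (j+1) (F (j+1) l)).toReal
        = (μ (j+1) (F j i0)).toReal := by
      have hmeasplit : μ (j+1) (F j i0)
          = ∑ l ∈ succSet p j (j+1) i0, μ (j+1) (F (j+1) l) := by
        conv_lhs => rw [hSsplit]
        exact measure_biUnion_finset hpairs (fun l _ => hFmeas (j+1) l)
      rw [hmeasplit, ENNReal.toReal_sum fun l _ => measure_ne_top _ _]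
    -- the density step
    have hdens : ∫ x in F j i0, (g j x / (∫ z, g j z ∂(μ j))) * u x ∂(μ j)
        = ∫ x in F j i0, u x ∂(μ (j+1)) := by
      have hind_m : Measurable ((F j i0).indicator u) := hum.indicator (hFmeas j i0)
      have hind_b : ∀ x, |(F j i0).indicator u x| ≤ Ch ^ preal := by
        intro x
        by_cases hx : x ∈ F j i0
        · rw [Set.indicator_of_mem hx]
          exact hub x
        · rw [Set.indicator_of_notMem hx]
          simpa using Real.rpow_nonneg hCh preal
      have h1 := hgdens j hjn ((F j i0).indicator u) hind_m ⟨Ch ^ preal, hind_b⟩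
      rw [integral_indicator (hFmeas j i0)] at h1
      have h2 : ∀ x, (F j i0).indicator u x * g j x
          = (∫ z, g j z ∂(μ j)) * (F j i0).indicator
              (fun x => (g j x / (∫ z, g j z ∂(μ j))) * u x) x := by
        intro x
        by_cases hx : x ∈ F j i0
        · rw [Set.indicator_of_mem hx, Set.indicator_of_mem hx]
          field_simp
        · rw [Set.indicator_of_notMem hx, Set.indicator_of_notMem hx]
          simp
      have h3 : ∫ x, (F j i0).indicator u x * g j x ∂(μ j)
          = (∫ z, g j z ∂(μ j))
            * ∫ x in F j i0, (g j x / (∫ z, g j z ∂(μ j))) * u x ∂(μ j) := by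
        calc ∫ x, (F j i0).indicator u x * g j x ∂(μ j)
            = ∫ x, (∫ z, g j z ∂(μ j)) * (F j i0).indicator
                (fun x => (g j x / (∫ z, g j z ∂(μ j))) * u x) x ∂(μ j) :=
              integral_congr_ae (Filter.Eventually.of_forall h2)
          _ = (∫ z, g j z ∂(μ j)) * ∫ x, (F j i0).indicator
                (fun x => (g j x / (∫ z, g j z ∂(μ j))) * u x) x ∂(μ j) :=
              integral_const_mul _ _
          _ = _ := by rw [integral_indicator (hFmeas j i0)]
      rw [h3, mul_div_cancel_left₀ _ hcj.ne'] at h1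
      exact h1.symm
    -- pointwise estimate on F j i0
    have hmain : ∫ x in F j i0, |(g j x / (∫ z, g j z ∂(μ j))) * h x| ^ preal ∂(μ j)
        ≤ (γ * mRatio μ F j i0) ^ (preal - 1)
          * ∫ x in F j i0, (g j x / (∫ z, g j z ∂(μ j))) * u x ∂(μ j) := by
      rw [← integral_const_mul]
      have hint1 : IntegrableOn
          (fun x => |(g j x / (∫ z, g j z ∂(μ j))) * h x| ^ preal) (F j i0) (μ j) := by
        refine bdd_integrable (rpow_meas (((hgmeas j).div_const _).mul hhm) hp0)
          (rpow_bdd (C := (Cgj / (∫ z, g j z ∂(μ j))) * Ch) ?_ hp0)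
        intro x
        rw [abs_mul]
        refine mul_le_mul ?_ (hhb x) (abs_nonneg _) (by positivity)
        rw [abs_of_pos (hGpos x)]
        exact hGub x
      have hint2 : IntegrableOn
          (fun x => (γ * mRatio μ F j i0) ^ (preal - 1)
            * ((g j x / (∫ z, g j z ∂(μ j))) * u x)) (F j i0) (μ j) := by
        refine bdd_integrable (measurable_const.mul
          (((hgmeas j).div_const _).mul hum))
          (C := |(γ * mRatio μ F j i0) ^ (preal - 1)|
            * ((Cgj / (∫ z, g j z ∂(μ j))) * Ch ^ preal)) ?_
        intro x
        rw [abs_mul]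
        refine mul_le_mul le_rfl ?_ (abs_nonneg _) (abs_nonneg _)
        rw [abs_mul]
        refine mul_le_mul ?_ (hub x) (abs_nonneg _) (by positivity)
        rw [abs_of_pos (hGpos x)]
        exact hGub x
      refine setIntegral_mono_on hint1 hint2 (hFmeas j i0) ?_
      intro x hx
      have e1 : |(g j x / (∫ z, g j z ∂(μ j))) * h x|
          = (g j x / (∫ z, g j z ∂(μ j))) * |h x| := by
        rw [abs_mul, abs_of_pos (hGpos x)]
      rw [e1, Real.mul_rpow (hGpos x).le (abs_nonneg _)]
      have e2 : (g j x / (∫ z, g j z ∂(μ j))) ^ preal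
          = (g j x / (∫ z, g j z ∂(μ j))) ^ (preal - 1)
            * (g j x / (∫ z, g j z ∂(μ j))) := by
        have e3 := Real.rpow_add (hGpos x) (preal - 1) 1
        rw [sub_add_cancel, Real.rpow_one] at e3
        exact e3
      rw [e2]
      simp only [hudef]
      rw [mul_assoc]
      refine mul_le_mul_of_nonneg_right
        (Real.rpow_le_rpow (hGpos x).le (hGb x hx) (by linarith)) ?_
      exact mul_nonneg (hGpos x).le (Real.rpow_nonneg (abs_nonneg _) _)
    -- assemble everything
    have hγp0 : (0:ℝ) ≤ γ ^ ((preal - 1)/preal) := Real.rpow_nonneg (by linarith) _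
    have hXnn : 0 ≤ γ ^ ((preal - 1)/preal) * δ * M * N :=
      mul_nonneg (mul_nonneg (mul_nonneg hγp0 hδ) hMnn) hNnn
    refine locNorm_le_of_integral_le hpreal hXnn ?_
    have hqx : ∀ x, qFull μ g K qhat j k f x
        = (g j x / (∫ z, g j z ∂(μ j))) * h x := by
      intro x
      rw [hhdef, hKfdef]
      rfl
    have hγmnn : (0:ℝ) ≤ (γ * mRatio μ F j i0) ^ (preal - 1) :=
      Real.rpow_nonneg (mul_nonneg (by linarith) hm0.le) _
    have hbma : (μ (j+1) (F j i0)).toReal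
        = mRatio μ F j i0 * (μ j (F j i0)).toReal := by
      rw [mRatio, div_mul_cancel₀ _ ha.ne']
    have hmp : mRatio μ F j i0 ^ (preal - 1) * mRatio μ F j i0
        = mRatio μ F j i0 ^ preal := by
      have e3 := Real.rpow_add hm0 (preal - 1) 1
      rw [sub_add_cancel, Real.rpow_one] at e3
      exact e3.symm
    have halg : ((μ j (F j i0)).toReal)⁻¹ * ((γ * mRatio μ F j i0) ^ (preal - 1)
          * ((μ (j+1) (F j i0)).toReal * D ^ preal))
        = (γ ^ ((preal - 1)/preal) * δ * M * N) ^ preal := by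
      rw [Real.mul_rpow (by linarith : (0:ℝ) ≤ γ) hm0.le]
      rw [hDdef]
      rw [Real.mul_rpow (mul_nonneg hδ (div_nonneg hMnn hm0.le)) hNnn]
      rw [Real.mul_rpow hδ (div_nonneg hMnn hm0.le)]
      rw [Real.div_rpow hMnn hm0.le]
      rw [Real.mul_rpow (mul_nonneg (mul_nonneg hγp0 hδ) hMnn) hNnn]
      rw [Real.mul_rpow (mul_nonneg hγp0 hδ) hMnn]
      rw [Real.mul_rpow hγp0 hδ]
      rw [← Real.rpow_mul (by linarith : (0:ℝ) ≤ γ), div_mul_cancel₀ _ hpne]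
      rw [hbma, ← hmp]
      have hmm1 : mRatio μ F j i0 ^ (preal - 1) ≠ 0 :=
        (Real.rpow_pos_of_pos hm0 _).ne'
      field_simp
    calc ∫ x, |qFull μ g K qhat j k f x| ^ preal ∂(muLoc (μ j) (F j i0))
        = ∫ x, |(g j x / (∫ z, g j z ∂(μ j))) * h x| ^ preal
            ∂(muLoc (μ j) (F j i0)) := by
          simp only [hqx]
      _ = ((μ j (F j i0)).toReal)⁻¹
            * ∫ x in F j i0, |(g j x / (∫ z, g j z ∂(μ j))) * h x| ^ preal ∂(μ j) :=
          muLoc_integral _ _ _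
      _ ≤ ((μ j (F j i0)).toReal)⁻¹ * ((γ * mRatio μ F j i0) ^ (preal - 1)
            * ∫ x in F j i0, (g j x / (∫ z, g j z ∂(μ j))) * u x ∂(μ j)) :=
          mul_le_mul_of_nonneg_left hmain (inv_nonneg.mpr ha.le)
      _ = ((μ j (F j i0)).toReal)⁻¹ * ((γ * mRatio μ F j i0) ^ (preal - 1)
            * ∑ l ∈ succSet p j (j+1) i0, ∫ x in F (j+1) l, u x ∂(μ (j+1))) := by
          rw [hdens, hSsplitInt]
      _ ≤ ((μ j (F j i0)).toReal)⁻¹ * ((γ * mRatio μ F j i0) ^ (preal - 1)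
            * ∑ l ∈ succSet p j (j+1) i0,
                (μ (j+1) (F (j+1) l)).toReal * D ^ preal) := by
          refine mul_le_mul_of_nonneg_left
            (mul_le_mul_of_nonneg_left (Finset.sum_le_sum hperl) hγmnn)
            (inv_nonneg.mpr ha.le)
      _ = ((μ j (F j i0)).toReal)⁻¹ * ((γ * mRatio μ F j i0) ^ (preal - 1)
            * ((μ (j+1) (F j i0)).toReal * D ^ preal)) := by
          rw [← Finset.sum_mul, hbsum]
      _ = (γ ^ ((preal - 1)/preal) * δ * M * N) ^ preal := halg

  refine ⟨key i, ?_⟩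
  rw [maxNorm]
  apply Finset.sup'_le
  intro i' _
  refine le_trans (key i') ?_
  have hM0 : 0 ≤ (succSet p j k i').sup' (hsne j k (Nat.lt_of_succ_lt hjk) hkn i')
      (Mprod μ F p j k) := by
    apply sup'_nonneg_of
    intro r _
    exact Finset.prod_nonneg fun t _ => div_nonneg ENNReal.toReal_nonneg ENNReal.toReal_nonneg
  have hN0 : 0 ≤ (succSet p j k i').sup' (hsne j k (Nat.lt_of_succ_lt hjk) hkn i')
      (fun s => locNorm (muLoc (μ k) (F k s)) qreal f) := by
    apply sup'_nonneg_of
    intro r _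
    exact locNorm_nonneg _ _ _
  have h1 : (succSet p j k i').sup' (hsne j k (Nat.lt_of_succ_lt hjk) hkn i')
      (Mprod μ F p j k) ≤ (Finset.univ.sup' Finset.univ_nonempty fun i'' : I j =>
        (succSet p j k i'').sup' (hsne j k (Nat.lt_of_succ_lt hjk) hkn i'')
          (Mprod μ F p j k)) :=
    Finset.le_sup' (fun i'' : I j =>
      (succSet p j k i'').sup' (hsne j k (Nat.lt_of_succ_lt hjk) hkn i'')
        (Mprod μ F p j k)) (Finset.mem_univ i')
  have h2 : (succSet p j k i').sup' (hsne j k (Nat.lt_of_succ_lt hjk) hkn i')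
      (fun s => locNorm (muLoc (μ k) (F k s)) qreal f) ≤ maxNorm μ F k qreal f := by
    rw [maxNorm]
    apply Finset.sup'_le
    intro r _
    exact Finset.le_sup' (fun s : I k => locNorm (muLoc (μ k) (F k s)) qreal f)
      (Finset.mem_univ r)
  have hγ0 : (0:ℝ) ≤ γ ^ ((preal - 1)/preal) := Real.rpow_nonneg (by linarith) _
  calc γ ^ ((preal - 1)/preal) * δ
        * ((succSet p j k i').sup' (hsne j k (Nat.lt_of_succ_lt hjk) hkn i')
            (Mprod μ F p j k))
        * ((succSet p j k i').sup' (hsne j k (Nat.lt_of_succ_lt hjk) hkn i')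
            fun s => locNorm (muLoc (μ k) (F k s)) qreal f)
      ≤ γ ^ ((preal - 1)/preal) * δ
        * (Finset.univ.sup' Finset.univ_nonempty fun i'' : I j =>
            (succSet p j k i'').sup' (hsne j k (Nat.lt_of_succ_lt hjk) hkn i'')
              (Mprod μ F p j k))
        * maxNorm μ F k qreal f := by
        exact mul_le_mul (mul_le_mul le_rfl h1 hM0 (mul_nonneg hγ0 hδ)) h2 hN0
          (mul_nonneg (mul_nonneg hγ0 hδ) (le_trans hM0 h1))
    _ = _ := rfl
end
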